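/- arXiv:2103.15139 — 7 statements merged into one kernel-verified Lean document; each statement's English description precedes it below -/
import Mathlib

section
/- Let P be a poset and let U, V be Scott open subsets of P. Then U ≺ V in the complete lattice σ(P) of Scott open subsets of P (i.e., V lies in the interior of ↑U with respect to the upper topology on σ(P)) if and only if there exists a finite subset F of P such that U ⊆ ↑F ⊆ V. -/
open Topology TopologicalSpace Set

/-- For Scott open sets `U`, `V` of a poset `P` (elements of the complete lattice `σ(P)`),
`U ≺ V` iff `V` lies in the interior of `↑U` with respect to the upper topology on `σ(P)`.
This is equivalent to the existence of a finite `F ⊆ P` with `U ⊆ ↑F ⊆ V`. -/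
theorem scott_open_prec_iff_exists_finite_upperSet
    {P : Type*} [PartialOrder P] [TopologicalSpace P] [Topology.IsScott P Set.univ]
    (U V : TopologicalSpace.Opens P) :
    V ∈ @interior (TopologicalSpace.Opens P) (Topology.upper (TopologicalSpace.Opens P))
        (Set.Ici U) ↔
      ∃ F : Set P, F.Finite ∧ (U : Set P) ⊆ ↑(upperClosure F) ∧
        (↑(upperClosure F) : Set P) ⊆ (V : Set P) := by
  letI T : TopologicalSpace (Opens P) := Topology.upper (Opens P)
  have hgen : T = generateFrom {s : Set (Opens P) | ∃ a, (Iic a)ᶜ = s} := rfl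
  have hB := TopologicalSpace.isTopologicalBasis_of_subbasis hgen
  constructor
  · intro hV
    rw [mem_interior_iff_mem_nhds, hB.mem_nhds_iff] at hV
    obtain ⟨t, ⟨f, ⟨hffin, hfsub⟩, rfl⟩, hVt, htU⟩ := hV
    -- for each s ∈ f, s = (Iic Z)ᶜ; choose x ∈ V with x ∉ Z
    have key : ∀ s ∈ f, ∃ x : P, x ∈ V ∧ ∀ W : Opens P, (x : P) ∈ W → W ∈ s := by
      intro s hs
      obtain ⟨Z, rfl⟩ := hfsub hs
      have hVZ : ¬ V ≤ Z := fun h => hVt _ hs h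
      obtain ⟨x, hxV, hxZ⟩ := SetLike.not_le_iff_exists.mp hVZ
      exact ⟨x, hxV, fun W hW hWZ => hxZ (hWZ hW)⟩
    choose g hg1 hg2 using key
    haveI : Finite ↥f := hffin.to_subtype
    refine ⟨Set.range (fun s : f => g s s.2), ?_, ?_, ?_⟩
    · exact Set.finite_range _
    · intro p hp
      by_contra hpF
      simp only [SetLike.mem_coe, mem_upperClosure] at hpF
      push_neg at hpF
      -- W = complement of Iic p is Scott open
      have hWopen : IsOpen ((Set.Iic p)ᶜ) :=
        (isClosed_Iic (a := p)).isOpen_compl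
      set W : Opens P := ⟨(Set.Iic p)ᶜ, hWopen⟩ with hWdef
      have hWmem : W ∈ ⋂₀ f := by
        intro s hs
        refine hg2 s hs W ?_
        exact fun h => hpF (g s hs) ⟨⟨s, hs⟩, rfl⟩ h
      have : U ≤ W := htU hWmem
      exact (SetLike.le_def.mp this hp) (le_refl p)
    · rintro q ⟨x, ⟨⟨s, hs⟩, rfl⟩, hxq⟩
      exact (Topology.IsScott.isUpperSet_of_isOpen (D := Set.univ) V.isOpen) hxq (hg1 s hs)
  · rintro ⟨F, hFfin, hUF, hFV⟩
    -- for each x, Z x := sSup of opens not containing x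
    set Z : P → Opens P := fun x => sSup {W : Opens P | x ∉ W} with hZ
    have hZspec : ∀ (x : P) (W : Opens P), W ≤ Z x ↔ x ∉ W := by
      intro x W
      constructor
      · intro h hx
        obtain ⟨W', hW', hxW'⟩ := Opens.mem_sSup.mp (h hx)
        exact hW' hxW'
      · intro h
        exact le_sSup h
    rw [mem_interior_iff_mem_nhds, hB.mem_nhds_iff]
    refine ⟨⋂₀ ((fun x => (Iic (Z x))ᶜ) '' F), ⟨_, ⟨hFfin.image _, ?_⟩, rfl⟩, ?_, ?_⟩
    · rintro s ⟨x, _, rfl⟩; exact ⟨Z x, rfl⟩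
    · rintro s ⟨x, hxF, rfl⟩
      simp only [mem_compl_iff, mem_Iic]
      intro h
      exact (hZspec x V).mp h (hFV (subset_upperClosure hxF))
    · intro W hW
      intro p hp
      obtain ⟨x, hxF, hxp⟩ := hUF hp
      have : W ∈ (Iic (Z x))ᶜ := hW _ ⟨x, hxF, rfl⟩
      have hxW : x ∈ W := by
        by_contra hx
        exact this ((hZspec x W).mpr hx)
      exact (Topology.IsScott.isUpperSet_of_isOpen (D := Set.univ) W.isOpen) hxp hxW
end

section
/- Let L be a continuous lattice such that the upper topology on L^op coincides with the Scott topology on L^op, i.e., υ(L^op) = σ(L^op). Then the space (L^op, σ(L^op)) is sober and locally compact. -/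
open Topology TopologicalSpace Set
open Filter

/-- `x` is way-below `y`: for every directed set `d` having a least upper bound `a`,
if `y ≤ a` then some element of `d` dominates `x`. -/
def WayBelow {α : Type*} [Preorder α] (x y : α) : Prop :=
  ∀ d : Set α, d.Nonempty → DirectedOn (· ≤ ·) d → ∀ a : α, IsLUB d a → y ≤ a → ∃ z ∈ d, x ≤ z

/-- A poset is continuous if for every `x` the set of elements way-below `x` is directed
(in particular nonempty) with least upper bound `x`. -/
def ContinuousPoset (α : Type*) [Preorder α] : Prop :=
  ∀ x : α, {d : α | WayBelow d x}.Nonempty ∧ DirectedOn (· ≤ ·) {d : α | WayBelow d x} ∧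
    IsLUB {d : α | WayBelow d x} x

lemma wayBelow_le {α : Type*} [Preorder α] {d x : α} (h : WayBelow d x) : d ≤ x := by
  obtain ⟨z, hz, h'⟩ := h {x} ⟨x, rfl⟩ (directedOn_singleton (r := (· ≤ ·)) x) x
    isLUB_singleton le_rfl
  rw [mem_singleton_iff] at hz
  exact hz ▸ h'

lemma wayBelow_mono_left {α : Type*} [Preorder α] {d' d x : α} (h : d' ≤ d)
    (hw : WayBelow d x) : WayBelow d' x := fun D hne hdir a ha hxa =>
  (hw D hne hdir a ha hxa).imp fun z hz => ⟨hz.1, h.trans hz.2⟩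

lemma wayBelow_mono_right {α : Type*} [Preorder α] {d x y : α} (hw : WayBelow d x)
    (h : x ≤ y) : WayBelow d y := fun D hne hdir a ha hya => hw D hne hdir a ha (h.trans hya)

lemma exists_wayBelow_not_le {L : Type*} [CompleteLattice L] (hL : ContinuousPoset L)
    {y x : L} (h : ¬ y ≤ x) : ∃ d, WayBelow d y ∧ ¬ d ≤ x := by
  by_contra hc
  push_neg at hc
  exact h ((hL y).2.2.2 fun d hd => hc d hd)

lemma wayBelow_interpolate {L : Type*} [CompleteLattice L] (hL : ContinuousPoset L)
    {d x : L} (h : WayBelow d x) : ∃ e, WayBelow d e ∧ WayBelow e x := by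
  have hne : {b : L | ∃ c, WayBelow b c ∧ WayBelow c x}.Nonempty := by
    obtain ⟨c, hc⟩ := (hL x).1
    obtain ⟨b, hb⟩ := (hL c).1
    exact ⟨b, c, hb, hc⟩
  have hdir : DirectedOn (· ≤ ·) {b : L | ∃ c, WayBelow b c ∧ WayBelow c x} := by
    rintro b₁ ⟨c₁, hb₁, hc₁⟩ b₂ ⟨c₂, hb₂, hc₂⟩
    obtain ⟨c₃, hc₃, h13, h23⟩ := (hL x).2.1 c₁ hc₁ c₂ hc₂
    obtain ⟨b₃, hb₃, g13, g23⟩ := (hL c₃).2.1 b₁ (wayBelow_mono_right hb₁ h13) b₂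
      (wayBelow_mono_right hb₂ h23)
    exact ⟨b₃, ⟨c₃, hb₃, hc₃⟩, g13, g23⟩
  have hlub : IsLUB {b : L | ∃ c, WayBelow b c ∧ WayBelow c x} x := by
    constructor
    · rintro b ⟨c, hb, hc⟩
      exact (wayBelow_le hb).trans (wayBelow_le hc)
    · intro u hu
      refine (hL x).2.2.2 fun c hc => ?_
      refine (hL c).2.2.2 fun b hb => ?_
      exact hu ⟨c, hb, hc⟩
  obtain ⟨b, ⟨c, hbc, hcx⟩, hdb⟩ := h _ hne hdir x hlub le_rfl
  exact ⟨c, wayBelow_mono_left hdb hbc, hcx⟩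

lemma upper_nhds_eq {M : Type*} [Preorder M] [TopologicalSpace M] [Topology.IsUpper M] (x : M) :
    𝓝 x = ⨅ s ∈ {s : Set M | x ∈ s ∧ s ∈ {t : Set M | ∃ c, (Iic c)ᶜ = t}}, 𝓟 s := by
  rw [Topology.IsUpper.topology_eq M]
  exact nhds_generateFrom

lemma isCompact_of_isUpperSet_of_codirInf {α : Type*} [CompleteLattice α] [TopologicalSpace α]
    [Topology.IsUpper α] {K : Set α} (hup : IsUpperSet K)
    (hinf : ∀ B : Set α, B.Nonempty → DirectedOn (· ≥ ·) B → B ⊆ K → sInf B ∈ K) :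
    IsCompact K := by
  rw [isCompact_iff_ultrafilter_le_nhds]
  intro f hf
  have hBne : {c : α | Iic c ∈ f}.Nonempty :=
    ⟨⊤, show Iic (⊤ : α) ∈ f by rw [Iic_top]; exact Filter.univ_mem⟩
  have hBdir : DirectedOn (· ≥ ·) {c : α | Iic c ∈ f} := by
    intro c₁ h₁ c₂ h₂
    refine ⟨c₁ ⊓ c₂, ?_, inf_le_left, inf_le_right⟩
    have h3 : Iic (c₁ ⊓ c₂) = Iic c₁ ∩ Iic c₂ := Iic_inter_Iic.symm
    rw [mem_setOf_eq, h3]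
    exact Filter.inter_mem h₁ h₂
  have hBK : {c : α | Iic c ∈ f} ⊆ K := by
    intro c hc
    obtain ⟨z, hz1, hz2⟩ :=
      Filter.nonempty_of_mem (Filter.inter_mem hc (Filter.le_principal_iff.1 hf))
    exact hup hz1 hz2
  refine ⟨sInf {c : α | Iic c ∈ f}, hinf _ hBne hBdir hBK, ?_⟩
  rw [upper_nhds_eq]
  refine le_iInf₂ fun s hs => ?_
  obtain ⟨hxs, c, rfl⟩ := hs
  rw [Filter.le_principal_iff]
  by_contra hns
  have hIic : Iic c ∈ f := by
    by_contra h2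
    exact hns (Ultrafilter.compl_mem_iff_notMem.2 h2)
  exact hxs (sInf_le hIic)

/-- If `L` is a continuous lattice such that the upper topology on `L^op` coincides with the
Scott topology on `L^op`, then `(L^op, σ(L^op))` is sober (T0 and quasi-sober) and locally
compact. -/
theorem sober_locallyCompact_of_continuousLattice_upper_eq_scott
    {L : Type*} [CompleteLattice L] (hL : ContinuousPoset L)
    (heq : Topology.upper Lᵒᵈ = Topology.scott Lᵒᵈ Set.univ) :
    @T0Space Lᵒᵈ (Topology.scott Lᵒᵈ Set.univ) ∧
      @QuasiSober Lᵒᵈ (Topology.scott Lᵒᵈ Set.univ) ∧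
      @LocallyCompactSpace Lᵒᵈ (Topology.scott Lᵒᵈ Set.univ) := by
  rw [← heq]
  letI : TopologicalSpace Lᵒᵈ := Topology.upper Lᵒᵈ
  haveI : Topology.IsUpper Lᵒᵈ := ⟨rfl⟩
  refine ⟨inferInstance, ?_, ?_⟩
  · -- QuasiSober
    classical
    constructor
    intro s hs hs'
    have hxs : sSup s ∈ s := by
      by_contra hx
      obtain ⟨b, ⟨t, htf, rfl⟩, hxb, hbs⟩ :=
        (Topology.IsUpper.isTopologicalBasis (α := Lᵒᵈ)).exists_subset_of_mem_open hx
          hs'.isOpen_compl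
      have hst : s ⊆ ↑(lowerClosure t) := by
        intro z hz
        by_contra hzc
        exact hbs hzc hz
      obtain ⟨w, hw, hsw⟩ := (isIrreducible_iff_sUnion_isClosed.1 hs) (htf.toFinset.image Iic)
        (by
          intro z hz
          obtain ⟨a, _, rfl⟩ := Finset.mem_image.1 hz
          exact isClosed_Iic)
        (by
          intro z hz
          obtain ⟨a, ha, hza⟩ := mem_lowerClosure.1 (hst hz)
          exact ⟨Iic a, Finset.mem_image.2 ⟨a, htf.mem_toFinset.2 ha, rfl⟩, hza⟩)
      obtain ⟨a, ha, rfl⟩ := Finset.mem_image.1 hw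
      exact hxb (mem_lowerClosure.2 ⟨a, htf.mem_toFinset.1 ha, sSup_le fun z hz => hsw hz⟩)
    refine ⟨sSup s, ?_⟩
    show closure {sSup s} = s
    rw [Topology.IsUpper.closure_singleton]
    apply subset_antisymm
    · intro z hz
      exact (Topology.IsUpper.isLowerSet_of_isClosed hs') hz hxs
    · intro z hz
      exact le_sSup hz
  · -- LocallyCompactSpace
    classical
    refine ⟨fun x n hn => ?_⟩
    obtain ⟨u, hun, huo, hxu⟩ := mem_nhds_iff.1 hn
    obtain ⟨b, ⟨t, htf, rfl⟩, hxb, hbu⟩ :=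
      (Topology.IsUpper.isTopologicalBasis (α := Lᵒᵈ)).exists_subset_of_mem_open hxu huo
    have hx' : ∀ a ∈ t, ¬ (OrderDual.ofDual a ≤ OrderDual.ofDual x) := by
      intro a ha hle
      exact hxb (mem_lowerClosure.2 ⟨a, ha, hle⟩)
    have hch : ∀ a : Lᵒᵈ, ∃ dl : L,
        a ∈ t → WayBelow dl (OrderDual.ofDual a) ∧ ¬ dl ≤ OrderDual.ofDual x := by
      intro a
      by_cases ha : a ∈ t
      · obtain ⟨dl, h1, h2⟩ := exists_wayBelow_not_le hL (hx' a ha)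
        exact ⟨dl, fun _ => ⟨h1, h2⟩⟩
      · exact ⟨⊥, fun h => absurd h ha⟩
    choose d hd using hch
    set K : Set Lᵒᵈ := {z | ∀ a ∈ t, ¬ WayBelow (d a) (OrderDual.ofDual z)} with hK
    set N : Set Lᵒᵈ := ⋂ a ∈ t, (Iic (OrderDual.toDual (d a)))ᶜ with hN
    have hNopen : IsOpen N := htf.isOpen_biInter fun a _ => isClosed_Iic.isOpen_compl
    have hxN : x ∈ N := by
      rw [hN, mem_iInter₂]
      intro a ha
      exact fun h => ((hd a) ha).2 h
    have hNK : N ⊆ K := by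
      intro z hz a ha hw
      rw [hN, mem_iInter₂] at hz
      exact hz a ha (wayBelow_le hw)
    have hKb : K ⊆ (↑(lowerClosure t))ᶜ := by
      intro z hz hmem
      obtain ⟨a, ha, hza⟩ := mem_lowerClosure.1 hmem
      exact hz a ha (wayBelow_mono_right ((hd a) ha).1 hza)
    refine ⟨K, mem_nhds_iff.2 ⟨N, hNK, hNopen, hxN⟩, hKb.trans (hbu.trans hun), ?_⟩
    apply isCompact_of_isUpperSet_of_codirInf
    · intro p q hpq hp a ha hw
      exact hp a ha (wayBelow_mono_right hw hpq)
    · intro B hBne hBdir hBK a ha hw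
      rw [ofDual_sInf] at hw
      have hCne : (OrderDual.toDual ⁻¹' B : Set L).Nonempty := by
        obtain ⟨z, hz⟩ := hBne
        exact ⟨OrderDual.ofDual z, hz⟩
      have hCdir : DirectedOn (· ≤ ·) (OrderDual.toDual ⁻¹' B : Set L) := by
        intro c₁ h₁ c₂ h₂
        obtain ⟨z, hz, g₁, g₂⟩ := hBdir _ h₁ _ h₂
        exact ⟨OrderDual.ofDual z, hz, g₁, g₂⟩
      obtain ⟨e, hde, hesup⟩ := wayBelow_interpolate hL hw
      obtain ⟨c, hcC, hec⟩ := hesup _ hCne hCdir _ (isLUB_sSup _) le_rfl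
      exact hBK hcC a ha (wayBelow_mono_right hde hec)
end

section
/- Let P be a poset such that for every n ∈ ℕ the Scott topology on the product poset P^n coincides with the n-fold product of the Scott topology on P, i.e., Σ(∏^n P) = ∏^n(ΣP). Then on the complete lattice Γ(P) of Scott closed subsets of P, the Scott topology coincides with the lower Vietoris topology: σ(Γ(P)) = υ(Γ(P)). -/
open Topology TopologicalSpace Set

/-- The lower Vietoris topology on the lattice of closed subsets of a topological space,
generated by the subbasis of sets `◊U = {A closed | A ∩ U ≠ ∅}` for `U` open. -/
def lowerVietoris (X : Type*) [TopologicalSpace X] :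
    TopologicalSpace (TopologicalSpace.Closeds X) :=
  TopologicalSpace.generateFrom
    {S | ∃ U : Set X, IsOpen U ∧ S = {A : TopologicalSpace.Closeds X | ((A : Set X) ∩ U).Nonempty}}

section Aux

variable {P : Type*} [PartialOrder P] [TopologicalSpace P] [Topology.IsScott P Set.univ]

/-- The map `(y₁, …, yₙ) ↦ ↓y₁ ∪ ⋯ ∪ ↓yₙ` from `Pⁿ` to the Scott-closed sets of `P`. -/
def phiAux (n : ℕ) (y : Fin n → P) : Closeds P :=
  ⟨⋃ i, Iic (y i), isClosed_iUnion_of_finite fun _ => isClosed_Iic⟩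

lemma mem_phiAux {n : ℕ} {y : Fin n → P} {p : P} :
    p ∈ phiAux n y ↔ ∃ i, p ≤ y i := by
  simp [phiAux, ← SetLike.mem_coe]

lemma phiAux_mono {n : ℕ} {y z : Fin n → P} (h : y ≤ z) : phiAux n y ≤ phiAux n z := by
  intro p hp
  obtain ⟨i, hi⟩ := mem_phiAux.1 hp
  exact mem_phiAux.2 ⟨i, hi.trans (h i)⟩

lemma phiAux_le_iff {n : ℕ} {y : Fin n → P} {C : Closeds P} :
    phiAux n y ≤ C ↔ ∀ i, y i ∈ C := by
  constructor
  · exact fun h i => h (mem_phiAux.2 ⟨i, le_rfl⟩)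
  · intro h p hp
    obtain ⟨i, hi⟩ := mem_phiAux.1 hp
    exact Topology.IsScott.isLowerSet_of_isClosed C.isClosed hi (h i)

lemma directedOn_image_phiAux {n : ℕ} {D : Set (Fin n → P)}
    (hD : DirectedOn (· ≤ ·) D) : DirectedOn (· ≤ ·) (phiAux n '' D) := by
  rintro _ ⟨a, ha, rfl⟩ _ ⟨b, hb, rfl⟩
  obtain ⟨c, hc, hac, hbc⟩ := hD a ha b hb
  exact ⟨phiAux n c, ⟨c, hc, rfl⟩, phiAux_mono hac, phiAux_mono hbc⟩

lemma isLUB_image_phiAux {n : ℕ} {D : Set (Fin n → P)} (hne : D.Nonempty)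
    (hdir : DirectedOn (· ≤ ·) D) {y : Fin n → P} (h : IsLUB D y) :
    IsLUB (phiAux n '' D) (phiAux n y) := by
  constructor
  · rintro _ ⟨d, hd, rfl⟩
    exact phiAux_mono (h.1 hd)
  · intro C hC
    rw [phiAux_le_iff]
    intro i
    have hlub : IsLUB (Function.eval i '' D) (y i) := isLUB_pi.1 h i
    have hCc := Topology.IsScott.dirSupClosed_of_isClosed C.isClosed
    refine hCc ?_ (hne.image _) ?_ hlub
    swap
    · rintro _ ⟨a, ha, rfl⟩ _ ⟨b, hb, rfl⟩
      obtain ⟨c, hc, hac, hbc⟩ := hdir a ha b hb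
      exact ⟨c i, ⟨c, hc, rfl⟩, hac i, hbc i⟩
    · rintro _ ⟨d, hd, rfl⟩
      exact (phiAux_le_iff.1 (hC ⟨d, hd, rfl⟩)) i

/-- Characterization of Scott-open families of Scott-closed sets. -/
lemma scottOpen_iff (𝒰 : Set (Closeds P)) :
    IsOpen[Topology.scott (Closeds P) Set.univ] 𝒰 ↔ IsUpperSet 𝒰 ∧ DirSupInacc 𝒰 := by
  letI := Topology.scott (Closeds P) Set.univ
  haveI : Topology.IsScott (Closeds P) Set.univ := ⟨rfl⟩
  rw [Topology.IsScott.isOpen_iff_isUpperSet_and_dirSupInaccOn (D := Set.univ),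
    dirSupInaccOn_univ]

/-- The preimage of a Scott-open family under `phiAux n` is Scott-open in `Pⁿ`. -/
lemma phiAux_preimage_scottOpen {𝒰 : Set (Closeds P)} (hup : IsUpperSet 𝒰)
    (hdi : DirSupInacc 𝒰) (n : ℕ) :
    IsOpen[Topology.scott (Fin n → P) Set.univ] (phiAux (P := P) n ⁻¹' 𝒰) := by
  letI := Topology.scott (Fin n → P) Set.univ
  haveI : Topology.IsScott (Fin n → P) Set.univ := ⟨rfl⟩
  rw [Topology.IsScott.isOpen_iff_isUpperSet_and_dirSupInaccOn (D := Set.univ),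
    dirSupInaccOn_univ]
  refine ⟨fun y z hyz hy => hup (phiAux_mono hyz) hy, ?_⟩
  intro d hne hdir y hlub hy
  obtain ⟨B, hB𝒟, hB𝒰⟩ := hdi (hne.image _) (directedOn_image_phiAux hdir)
    (isLUB_image_phiAux hne hdir hlub) hy
  obtain ⟨e, he, rfl⟩ := hB𝒟
  exact ⟨e, he, hB𝒰⟩

/-- The Scott-closed set generated by a finite set, as an element of `Closeds P`. -/
def bFAux (F : Finset P) : Closeds P :=
  ⟨⋃ x ∈ F, Iic x,
    F.finite_toSet.isClosed_biUnion fun _ _ => isClosed_Iic⟩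

lemma mem_bFAux {F : Finset P} {p : P} : p ∈ bFAux F ↔ ∃ x ∈ F, p ≤ x := by
  simp [bFAux, ← SetLike.mem_coe]

lemma bFAux_mono {F G : Finset P} (h : F ⊆ G) : bFAux F ≤ bFAux G := by
  intro p hp
  obtain ⟨x, hx, hpx⟩ := mem_bFAux.1 hp
  exact mem_bFAux.2 ⟨x, h hx, hpx⟩

end Aux

/-- If `P` is a poset such that for every `n` the Scott topology on the product poset `Pⁿ`
coincides with the `n`-fold product of the Scott topology of `P`, then on the complete lattice
`Γ(P)` of Scott closed subsets of `P` the Scott topology coincides with the lower Vietoris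
topology. -/
theorem scott_eq_lowerVietoris_of_scott_prod_eq_prod_scott
    {P : Type*} [PartialOrder P] [TopologicalSpace P] [Topology.IsScott P Set.univ]
    (hprod : ∀ n : ℕ, Topology.scott (Fin n → P) Set.univ =
      (Pi.topologicalSpace : TopologicalSpace (Fin n → P))) :
    Topology.scott (TopologicalSpace.Closeds P) Set.univ = lowerVietoris P := by
  apply le_antisymm
  · -- Scott is finer: every subbasic lower-Vietoris open set is Scott open.
    apply le_generateFrom
    rintro S ⟨U, hU, rfl⟩
    rw [scottOpen_iff]
    constructor
    · intro A B hAB ⟨p, hpA, hpU⟩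
      exact ⟨p, hAB hpA, hpU⟩
    · intro d hne hdir S hlub hS
      obtain ⟨p, hpS, hpU⟩ := hS
      -- S is contained in the closure of the union of d
      have hclosed : IsClosed (closure (⋃ B ∈ d, (B : Set P))) := isClosed_closure
      have hub : (⟨_, hclosed⟩ : Closeds P) ∈ upperBounds d := by
        intro B hB
        exact fun q hq => subset_closure (Set.mem_biUnion hB hq)
      have hSsub : (S : Set P) ⊆ closure (⋃ B ∈ d, (B : Set P)) := hlub.2 hub
      obtain ⟨q, hqU, hqT⟩ := mem_closure_iff.1 (hSsub hpS) U hU hpU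
      obtain ⟨B, hBd, hqB⟩ := Set.mem_iUnion₂.1 hqT
      exact ⟨B, hBd, q, hqB, hqU⟩
  · -- lower Vietoris is finer: every Scott open family is lower-Vietoris open.
    intro 𝒰 h𝒰
    rw [scottOpen_iff] at h𝒰
    obtain ⟨hup, hdi⟩ := h𝒰
    letI := lowerVietoris P
    rw [isOpen_iff_forall_mem_open]
    intro A hA
    classical
    -- A is the directed sup of the bFAux F for finite F ⊆ A
    have hAlow : IsLowerSet (A : Set P) :=
      Topology.IsScott.isLowerSet_of_isClosed A.isClosed
    set 𝒟 : Set (Closeds P) := bFAux '' {F : Finset P | (F : Set P) ⊆ (A : Set P)} with h𝒟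
    have hne : 𝒟.Nonempty := ⟨bFAux ∅, ∅, by simp, rfl⟩
    have hdir : DirectedOn (· ≤ ·) 𝒟 := by
      rintro _ ⟨F, hF, rfl⟩ _ ⟨G, hG, rfl⟩
      exact ⟨bFAux (F ∪ G), ⟨F ∪ G, by simp only [Set.mem_setOf_eq, Finset.coe_union]; exact Set.union_subset hF hG, rfl⟩,
        bFAux_mono Finset.subset_union_left, bFAux_mono Finset.subset_union_right⟩
    have hlub : IsLUB 𝒟 A := by
      constructor
      · rintro _ ⟨F, hF, rfl⟩
        intro p hp
        obtain ⟨x, hx, hpx⟩ := mem_bFAux.1 hp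
        exact hAlow hpx (hF hx)
      · intro C hC p hp
        have : bFAux {p} ≤ C := hC ⟨{p}, by simpa using hp, rfl⟩
        exact this (mem_bFAux.2 ⟨p, Finset.mem_singleton_self p, le_rfl⟩)
    obtain ⟨_, ⟨F, hFA, rfl⟩, hF𝒰⟩ := hdi hne hdir hlub hA
    -- enumerate F as a function on Fin n
    set n := F.card with hn
    set x : Fin n → P := fun i => ((F.equivFin.symm i : F) : P) with hx
    have hxA : ∀ i, x i ∈ (A : Set P) := fun i => hFA (F.equivFin.symm i).2
    have hphix : phiAux n x = bFAux F := by
      apply SetLike.coe_injective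
      ext p
      rw [SetLike.mem_coe, SetLike.mem_coe, mem_phiAux, mem_bFAux]
      constructor
      · rintro ⟨i, hi⟩
        exact ⟨x i, (F.equivFin.symm i).2, hi⟩
      · rintro ⟨a, ha, hpa⟩
        refine ⟨F.equivFin ⟨a, ha⟩, ?_⟩
        simpa [hx] using hpa
    -- the preimage of 𝒰 under phiAux n is open in the product topology
    have hopen : IsOpen[Pi.topologicalSpace] (phiAux (P := P) n ⁻¹' 𝒰) := by
      rw [← hprod n]
      exact phiAux_preimage_scottOpen hup hdi n
    have hx𝒰 : x ∈ phiAux (P := P) n ⁻¹' 𝒰 := by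
      simp only [Set.mem_preimage, hphix]
      exact hF𝒰
    obtain ⟨I, u, hIu, hpi⟩ := isOpen_pi_iff.1 hopen x hx𝒰
    set V : Fin n → Set P := fun i => if i ∈ I then u i else Set.univ with hV
    have hVopen : ∀ i, IsOpen (V i) := by
      intro i
      by_cases hi : i ∈ I
      · simpa [hV, hi] using (hIu i hi).1
      · simp [hV, hi]
    set W : Set (Closeds P) :=
      ⋂ i : Fin n, {B : Closeds P | ((B : Set P) ∩ V i).Nonempty} with hW
    refine ⟨W, ?_, ?_, ?_⟩
    · -- W ⊆ 𝒰
      intro B hB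
      have hy : ∀ i : Fin n, ∃ y : P, y ∈ (B : Set P) ∩ V i := by
        intro i
        exact Set.mem_iInter.1 hB i
      choose y hy using hy
      have hypi : y ∈ (I : Set (Fin n)).pi u := by
        intro i hi
        have := (hy i).2
        simpa [hV, (Finset.mem_coe.1 hi)] using this
      have hphiy : phiAux n y ∈ 𝒰 := hpi hypi
      have hle : phiAux n y ≤ B := phiAux_le_iff.2 fun i => (hy i).1
      exact hup hle hphiy
    · -- W is lower-Vietoris open
      apply isOpen_iInter_of_finite
      intro i
      exact isOpen_generateFrom_of_mem ⟨V i, hVopen i, rfl⟩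
    · -- A ∈ W
      refine Set.mem_iInter.2 fun i => ⟨x i, hxA i, ?_⟩
      by_cases hi : i ∈ I
      · simpa [hV, hi] using (hIu i hi).2
      · simp [hV, hi]
end

section
/- Let P be a poset. If the space (P, σ(P)) is core-compact, then on the complete lattice Γ(P) of Scott closed subsets of P the Scott topology coincides with the lower Vietoris topology, σ(Γ(P)) = υ(Γ(P)), and moreover (Γ(P), σ(Γ(P))) is sober and locally compact. -/
open Topology TopologicalSpace Set

/-- A topological space is core-compact if its lattice of open subsets is a continuous
lattice. -/
def CoreCompact (X : Type*) [TopologicalSpace X] : Prop :=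
  ContinuousPoset (TopologicalSpace.Opens X)

/-! ### Auxiliary lemmas about `WayBelow` -/

section WayBelowAux

variable {α : Type*} [Preorder α]

lemma WayBelow.le {x y : α} (h : WayBelow x y) : x ≤ y := by
  obtain ⟨z, hz, hxz⟩ := h {y} (singleton_nonempty y)
    (fun a ha b hb => ⟨y, rfl, by simp_all, by simp_all⟩) y isLUB_singleton le_rfl
  rw [mem_singleton_iff] at hz
  exact hz ▸ hxz

lemma WayBelow.mono_left {x x' y : α} (hx : x ≤ x') (h : WayBelow x' y) :
    WayBelow x y := fun d hd hdir a ha hya => by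
  obtain ⟨z, hz, h'⟩ := h d hd hdir a ha hya
  exact ⟨z, hz, hx.trans h'⟩

lemma WayBelow.mono_right {x y y' : α} (h : WayBelow x y) (hy : y ≤ y') :
    WayBelow x y' := fun d hd hdir a ha h'a => h d hd hdir a ha (hy.trans h'a)

lemma ContinuousPoset.interpolate (hc : ContinuousPoset α) {x z : α}
    (h : WayBelow x z) : ∃ y, WayBelow x y ∧ WayBelow y z := by
  set D := {u | ∃ v, WayBelow u v ∧ WayBelow v z} with hD
  obtain ⟨⟨v0, hv0⟩, hdirz, hlubz⟩ := hc z
  have hne : D.Nonempty := by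
    obtain ⟨⟨u0, hu0⟩, -, -⟩ := hc v0
    exact ⟨u0, v0, hu0, hv0⟩
  have hdir : DirectedOn (· ≤ ·) D := by
    rintro u1 ⟨v1, hu1, hv1⟩ u2 ⟨v2, hu2, hv2⟩
    obtain ⟨v, hv, hv1v, hv2v⟩ := hdirz v1 hv1 v2 hv2
    obtain ⟨-, hdirv, -⟩ := hc v
    obtain ⟨u, hu, h1u, h2u⟩ := hdirv u1 (hu1.mono_right hv1v) u2 (hu2.mono_right hv2v)
    exact ⟨u, ⟨v, hu, hv⟩, h1u, h2u⟩
  have hlub : IsLUB D z := by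
    constructor
    · rintro u ⟨v, huv, hvz⟩
      exact huv.le.trans hvz.le
    · intro b hb
      refine hlubz.2 fun v hv => ?_
      obtain ⟨-, -, hlubv⟩ := hc v
      exact hlubv.2 fun u hu => hb ⟨v, hu, hv⟩
  obtain ⟨u, hu, hxu⟩ := h D hne hdir z hlub le_rfl
  obtain ⟨v, huv, hvz⟩ := hu
  exact ⟨v, WayBelow.mono_left hxu huv, hvz⟩

lemma directedOn_image_mono {β : Type*} [Preorder β] {f : α → β}
    (hf : Monotone f) {d : Set α} (h : DirectedOn (· ≤ ·) d) :
    DirectedOn (· ≤ ·) (f '' d) := by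
  rintro _ ⟨a, ha, rfl⟩ _ ⟨b, hb, rfl⟩
  obtain ⟨c, hc, hac, hbc⟩ := h a ha b hb
  exact ⟨f c, ⟨c, hc, rfl⟩, hf hac, hf hbc⟩

end WayBelowAux

lemma CoreCompact.exists_wayBelow {X : Type*} [TopologicalSpace X] (h : CoreCompact X)
    (U : Opens X) {x : X} (hx : x ∈ U) : ∃ V : Opens X, WayBelow V U ∧ x ∈ V := by
  obtain ⟨-, -, hlub⟩ := h U
  have hU : U = sSup {V : Opens X | WayBelow V U} := hlub.sSup_eq.symm
  rw [hU] at hx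
  obtain ⟨V, hV, hxV⟩ := Opens.mem_sSup.mp hx
  exact ⟨V, hV, hxV⟩

/-! ### List `Forall₂` helpers -/

lemma exists_left_of_forall₂ {γ δ : Type*} {R : γ → δ → Prop} :
    ∀ {l : List γ} {W : List δ}, List.Forall₂ R l W → ∀ {V}, V ∈ W → ∃ x ∈ l, R x V := by
  intro l W h
  induction h with
  | nil => intro V hV; cases hV
  | @cons a b l' W' hx h ih =>
    intro V hV
    rcases List.mem_cons.mp hV with rfl | hV
    · exact ⟨a, List.mem_cons_self, hx⟩
    · obtain ⟨x, hx', hR⟩ := ih hV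
      exact ⟨x, List.mem_cons_of_mem _ hx', hR⟩

lemma forall₂_of_forall_mem {γ δ : Type*} {p : γ → δ → Prop} :
    ∀ (W : List γ), (∀ V ∈ W, ∃ z, p V z) → ∃ y : List δ, List.Forall₂ p W y := by
  intro W
  induction W with
  | nil => exact fun _ => ⟨[], List.Forall₂.nil⟩
  | cons V W ih =>
    intro h
    obtain ⟨z, hz⟩ := h V (List.mem_cons_self)
    obtain ⟨y, hy⟩ := ih fun V' hV' => h V' (List.mem_cons_of_mem _ hV')
    exact ⟨z :: y, List.Forall₂.cons hz hy⟩

/-! ### The Scott topology on `Closeds P` -/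

section ScottGamma

variable {P : Type*} [PartialOrder P] [TopologicalSpace P] [Topology.IsScott P Set.univ]

lemma scottGamma_isOpen_iff {s : Set (Closeds P)} :
    IsOpen[Topology.scott (Closeds P) univ] s ↔ IsUpperSet s ∧ DirSupInacc s := by
  letI := Topology.scott (Closeds P) univ
  haveI : Topology.IsScott (Closeds P) univ := ⟨rfl⟩
  rw [Topology.IsScott.isOpen_iff_isUpperSet_and_dirSupInaccOn (D := univ), dirSupInaccOn_univ]

/-- The principal closed set `↓x`. -/
def lc (x : P) : Closeds P := ⟨Iic x, isClosed_Iic⟩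

lemma mem_lc {x y : P} : y ∈ lc x ↔ y ≤ x := Iff.rfl

lemma closeds_mem_of_le {A : Closeds P} {x y : P} (hxy : y ≤ x) (hx : x ∈ A) : y ∈ A :=
  Topology.IsScott.isLowerSet_of_isClosed A.isClosed hxy hx

lemma lc_le_iff {x : P} {A : Closeds P} : lc x ≤ A ↔ x ∈ A := by
  constructor
  · intro h
    exact SetLike.le_def.mp h (mem_lc.mpr le_rfl)
  · intro h
    exact SetLike.le_def.mpr fun y hy => closeds_mem_of_le (mem_lc.mp hy) h

lemma lc_mono : Monotone (lc (P := P)) := fun x y hxy =>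
  SetLike.le_def.mpr fun z hz => mem_lc.mpr ((mem_lc.mp hz).trans hxy)

lemma closeds_mem_of_isLUB {A : Closeds P} {d : Set P} (hne : d.Nonempty)
    (hdir : DirectedOn (· ≤ ·) d) {a : P} (hlub : IsLUB d a) (hd : d ⊆ (A : Set P)) : a ∈ A :=
  Topology.IsScott.dirSupClosed_of_isClosed A.isClosed hd hne hdir hlub

lemma isLUB_lc_sup {d : Set P} (hne : d.Nonempty) (hdir : DirectedOn (· ≤ ·) d) {sP : P}
    (hlub : IsLUB d sP) (C : Closeds P) :
    IsLUB ((fun y => lc y ⊔ C) '' d) (lc sP ⊔ C) := by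
  constructor
  · rintro _ ⟨y, hy, rfl⟩
    exact sup_le_sup_right (lc_mono (hlub.1 hy)) C
  · intro B hB
    obtain ⟨y0, hy0⟩ := id hne
    have hCB : C ≤ B := le_trans le_sup_right (hB ⟨y0, hy0, rfl⟩)
    have hdB : d ⊆ (B : Set P) := fun y hy =>
      lc_le_iff.mp (le_trans le_sup_left (hB ⟨y, hy, rfl⟩))
    exact sup_le (lc_le_iff.mpr (closeds_mem_of_isLUB hne hdir hlub hdB)) hCB

lemma isOpen_N {𝒰 : Set (Closeds P)} (hup : IsUpperSet 𝒰) (hdsi : DirSupInacc 𝒰)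
    (C : Closeds P) : IsOpen {z : P | lc z ⊔ C ∈ 𝒰} := by
  rw [Topology.IsScott.isOpen_iff_isUpperSet_and_dirSupInaccOn (D := univ), dirSupInaccOn_univ]
  constructor
  · intro z z' hzz' hz
    exact hup (sup_le_sup_right (lc_mono hzz') C) hz
  · intro d hne hdir a hlub ha
    obtain ⟨-, ⟨y, hy, rfl⟩, hm⟩ := hdsi (hne.image _)
      (directedOn_image_mono (fun _ _ h => sup_le_sup_right (lc_mono h) C) hdir)
      (isLUB_lc_sup hne hdir hlub C) ha
    exact ⟨y, hy, hm⟩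

/-- `NOp 𝒰 C` is the open set `{z | ↓z ⊔ C ∈ 𝒰}` as an element of `Opens P`. -/
def NOp {𝒰 : Set (Closeds P)} (hup : IsUpperSet 𝒰) (hdsi : DirSupInacc 𝒰) (C : Closeds P) :
    Opens P := ⟨{z : P | lc z ⊔ C ∈ 𝒰}, isOpen_N hup hdsi C⟩

lemma NOp_mono {𝒰 : Set (Closeds P)} (hup : IsUpperSet 𝒰) (hdsi : DirSupInacc 𝒰)
    {C C' : Closeds P} (h : C ≤ C') : NOp hup hdsi C ≤ NOp hup hdsi C' :=
  SetLike.le_def.mpr fun z hz => hup (sup_le_sup_left h _) hz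

lemma exists_of_lc_sup_lub {𝒰 : Set (Closeds P)} (hdsi : DirSupInacc 𝒰)
    {dd : Set (Closeds P)} (hne : dd.Nonempty) (hdir : DirectedOn (· ≤ ·) dd)
    {a : Closeds P} (hlub : IsLUB dd a) {z : P} (hz : lc z ⊔ a ∈ 𝒰) :
    ∃ B ∈ dd, lc z ⊔ B ∈ 𝒰 := by
  have hlub2 : IsLUB ((fun B => lc z ⊔ B) '' dd) (lc z ⊔ a) := by
    constructor
    · rintro _ ⟨B, hB, rfl⟩
      exact sup_le_sup_left (hlub.1 hB) _
    · intro E hE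
      obtain ⟨B0, hB0⟩ := hne
      exact sup_le (le_trans le_sup_left (hE ⟨B0, hB0, rfl⟩))
        (hlub.2 fun B hB => le_trans le_sup_right (hE ⟨B, hB, rfl⟩))
  obtain ⟨-, ⟨B, hB, rfl⟩, hm⟩ := hdsi (hne.image _)
    (directedOn_image_mono (fun _ _ h => sup_le_sup_left h _) hdir) hlub2 hz
  exact ⟨B, hB, hm⟩

/-- `gen l` is the closed set `↓x₁ ∪ … ∪ ↓xₙ` for `l = [x₁, …, xₙ]`. -/
def gen (l : List P) : Closeds P := l.foldr (fun x C => lc x ⊔ C) ⊥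

lemma gen_le {B : Closeds P} : ∀ (l : List P), (∀ x ∈ l, x ∈ B) → gen l ≤ B := by
  intro l
  induction l with
  | nil => exact fun _ => bot_le
  | cons x l ih =>
    intro h
    exact sup_le (lc_le_iff.mpr (h x (List.mem_cons_self)))
      (ih fun y hy => h y (List.mem_cons_of_mem _ hy))

lemma gen_append (l₁ l₂ : List P) : gen (l₁ ++ l₂) = gen l₁ ⊔ gen l₂ := by
  induction l₁ with
  | nil => simp [gen]
  | cons x l ih =>
    show lc x ⊔ gen (l ++ l₂) = (lc x ⊔ gen l) ⊔ gen l₂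
    rw [ih, sup_assoc]

/-- The key approximation lemma: if `↓x₁ ∪ … ∪ ↓xₙ` belongs to a Scott-open family `𝒰`
then there are open neighbourhoods `Vᵢ ∋ xᵢ` such that any choice of points `yᵢ ∈ Vᵢ` yields
`↓y₁ ∪ … ∪ ↓yₙ ∈ 𝒰`. -/
lemma key_lemma (hcc : CoreCompact P) :
    ∀ (l : List P) (𝒰 : Set (Closeds P)), IsUpperSet 𝒰 → DirSupInacc 𝒰 → gen l ∈ 𝒰 →
    ∃ W : List (Set P), List.Forall₂ (fun x V => x ∈ V ∧ IsOpen V) l W ∧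
      ∀ y : List P, List.Forall₂ (fun V z => z ∈ V) W y → gen y ∈ 𝒰 := by
  intro l
  induction l with
  | nil =>
    intro 𝒰 hup hdsi hmem
    refine ⟨[], List.Forall₂.nil, fun y hy => ?_⟩
    cases hy
    exact hmem
  | cons x l ih =>
    intro 𝒰 hup hdsi hmem
    have hxN : x ∈ NOp hup hdsi (gen l) := hmem
    obtain ⟨V₀, hV₀N, hxV₀⟩ := hcc.exists_wayBelow _ hxN
    set 𝒱 : Set (Closeds P) := {B | WayBelow V₀ (NOp hup hdsi B)} with h𝒱
    have hupV : IsUpperSet 𝒱 := fun B B' hBB' hB =>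
      hB.mono_right (NOp_mono hup hdsi hBB')
    have hdsiV : DirSupInacc 𝒱 := by
      intro dd hne hdir a hlub ha
      obtain ⟨V', hV₀V', hV'a⟩ := hcc.interpolate ha
      have hlubN : IsLUB ((fun B => NOp hup hdsi B) '' dd) (NOp hup hdsi a) := by
        constructor
        · rintro _ ⟨B, hB, rfl⟩
          exact NOp_mono hup hdsi (hlub.1 hB)
        · intro E hE
          refine SetLike.le_def.mpr fun z hz => ?_
          obtain ⟨B, hB, hm⟩ := exists_of_lc_sup_lub hdsi hne hdir hlub hz
          exact SetLike.le_def.mp (hE ⟨B, hB, rfl⟩) hm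
      obtain ⟨-, ⟨B, hB, rfl⟩, hle⟩ := hV'a _ (hne.image _)
        (directedOn_image_mono (fun _ _ h => NOp_mono hup hdsi h) hdir) _ hlubN le_rfl
      exact ⟨B, hB, hV₀V'.mono_right hle⟩
    have hgen𝒱 : gen l ∈ 𝒱 := hV₀N
    obtain ⟨W', hW'₁, hW'₂⟩ := ih 𝒱 hupV hdsiV hgen𝒱
    refine ⟨(V₀ : Set P) :: W', List.Forall₂.cons ⟨hxV₀, V₀.2⟩ hW'₁, ?_⟩
    intro y hy
    cases hy with
    | cons hz hy' =>
      have h1 : gen _ ∈ 𝒱 := hW'₂ _ hy'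
      exact SetLike.le_def.mp h1.le hz

end ScottGamma

/-! ### The lower Vietoris topology -/

section Vietoris

variable {P : Type*} [PartialOrder P] [TopologicalSpace P] [Topology.IsScott P Set.univ]

lemma isOpen_dia {U : Set P} (hU : IsOpen U) :
    IsOpen[lowerVietoris P] {A : Closeds P | ((A : Set P) ∩ U).Nonempty} :=
  TopologicalSpace.GenerateOpen.basic _ ⟨U, hU, rfl⟩

lemma isUpperSet_of_vietoris_open {s : Set (Closeds P)} (h : IsOpen[lowerVietoris P] s) :
    IsUpperSet s := by
  induction h with
  | basic u hu =>
    obtain ⟨U, hU, rfl⟩ := hu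
    intro A B hAB hA
    obtain ⟨z, hz1, hz2⟩ := hA
    exact ⟨z, SetLike.le_def.mp hAB hz1, hz2⟩
  | univ => exact isUpperSet_univ
  | inter u v _ _ ihu ihv => exact ihu.inter ihv
  | sUnion S _ ih =>
    intro A B hAB hA
    obtain ⟨t, htS, hAt⟩ := hA
    exact ⟨t, htS, ih t htS hAB hAt⟩

lemma dia_isUpperSet_dirSupInacc {U : Set P} (hU : IsOpen U) :
    IsUpperSet {A : Closeds P | ((A : Set P) ∩ U).Nonempty} ∧
      DirSupInacc {A : Closeds P | ((A : Set P) ∩ U).Nonempty} := by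
  constructor
  · intro A B hAB hA
    obtain ⟨z, hz1, hz2⟩ := hA
    exact ⟨z, SetLike.le_def.mp hAB hz1, hz2⟩
  · intro dd hne hdir a hlub ha
    by_contra hcon
    rw [Set.not_nonempty_iff_eq_empty, Set.eq_empty_iff_forall_notMem] at hcon
    have hbound : a ≤ ⟨Uᶜ, hU.isClosed_compl⟩ := by
      refine hlub.2 fun B hB => SetLike.le_def.mpr fun z hz => ?_
      intro hzU
      exact hcon B ⟨hB, ⟨z, hz, hzU⟩⟩
    obtain ⟨z, hz1, hz2⟩ := ha
    exact SetLike.le_def.mp hbound hz1 hz2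

/-- Every Scott-open subset of `Γ(P)` is open in the lower Vietoris topology (this is where
core-compactness is used). -/
lemma vietoris_open_of_scott_open (hcc : CoreCompact P) {𝒰 : Set (Closeds P)}
    (hup : IsUpperSet 𝒰) (hdsi : DirSupInacc 𝒰) : IsOpen[lowerVietoris P] 𝒰 := by
  letI := lowerVietoris P
  rw [isOpen_iff_forall_mem_open]
  intro A hA
  -- `A` is the directed sup of the `gen l` for finite lists of members of `A`
  set D : Set (Closeds P) := gen '' {l : List P | ∀ x ∈ l, x ∈ A} with hD
  have hne : D.Nonempty := ⟨⊥, [], by simp, rfl⟩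
  have hdir : DirectedOn (· ≤ ·) D := by
    rintro _ ⟨l₁, h₁, rfl⟩ _ ⟨l₂, h₂, rfl⟩
    refine ⟨gen (l₁ ++ l₂), ⟨l₁ ++ l₂, ?_, rfl⟩, ?_, ?_⟩
    · intro z hz
      rcases List.mem_append.mp hz with h | h
      exacts [h₁ z h, h₂ z h]
    · rw [gen_append]; exact le_sup_left
    · rw [gen_append]; exact le_sup_right
  have hlub : IsLUB D A := by
    constructor
    · rintro _ ⟨l, hl, rfl⟩
      exact gen_le l hl
    · intro B hB
      refine SetLike.le_def.mpr fun z hz => ?_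
      have h1 : gen [z] ≤ B := hB ⟨[z], by simpa using hz, rfl⟩
      exact SetLike.le_def.mp h1 (le_sup_left (a := lc z) (b := (⊥ : Closeds P)) (mem_lc.mpr le_rfl))
  obtain ⟨-, ⟨l, hl, rfl⟩, hgen𝒰⟩ := hdsi hne hdir hlub hA
  obtain ⟨W, hW₁, hW₂⟩ := key_lemma hcc l 𝒰 hup hdsi hgen𝒰
  refine ⟨{B : Closeds P | ∀ V ∈ W, ((B : Set P) ∩ V).Nonempty}, ?_, ?_, ?_⟩
  · -- contained in 𝒰
    intro B hB
    obtain ⟨y, hy⟩ := forall₂_of_forall_mem (p := fun V z => z ∈ V ∧ z ∈ (B : Set P)) W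
      (fun V hV => by obtain ⟨z, hz1, hz2⟩ := hB V hV; exact ⟨z, hz2, hz1⟩)
    have hgy : gen y ∈ 𝒰 := hW₂ y (hy.imp fun V z hVz => hVz.1)
    have hyB : ∀ z ∈ y, z ∈ B := by
      intro z hz
      obtain ⟨V, -, hVz⟩ := exists_left_of_forall₂ hy hz
      exact hVz.2
    exact hup (gen_le y hyB) hgy
  · -- open
    clear hW₂ hgen𝒰 hl
    have hWopen : ∀ V ∈ W, IsOpen V := by
      intro V hV
      obtain ⟨z, -, hzV⟩ := exists_left_of_forall₂ hW₁ hV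
      exact hzV.2
    clear hW₁
    induction W with
    | nil => simpa using isOpen_univ
    | cons V W ihW =>
      have heq : {B : Closeds P | ∀ V' ∈ V :: W, ((B : Set P) ∩ V').Nonempty} =
          {B : Closeds P | ((B : Set P) ∩ V).Nonempty} ∩
            {B : Closeds P | ∀ V' ∈ W, ((B : Set P) ∩ V').Nonempty} := by
        ext B
        simp [List.forall_mem_cons]
      rw [heq]
      exact (isOpen_dia (hWopen V (List.mem_cons_self))).inter
        (ihW fun V' hV' => hWopen V' (List.mem_cons_of_mem _ hV'))
  · -- A belongs
    intro V hV
    obtain ⟨z, hzl, hz⟩ := exists_left_of_forall₂ hW₁ hV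
    exact ⟨z, hl z hzl, hz.1⟩

/-- The Scott topology on `Γ(P)` coincides with the lower Vietoris topology. -/
lemma scott_eq_lowerVietoris (hcc : CoreCompact P) :
    Topology.scott (Closeds P) univ = lowerVietoris P := by
  apply le_antisymm
  · apply le_generateFrom
    rintro s ⟨U, hU, rfl⟩
    exact scottGamma_isOpen_iff.mpr (dia_isUpperSet_dirSupInacc hU)
  · intro s hs
    rw [scottGamma_isOpen_iff] at hs
    exact vietoris_open_of_scott_open hcc hs.1 hs.2

lemma vietoris_closure_singleton (B : Closeds P) :
    closure[lowerVietoris P] {B} = {A : Closeds P | A ≤ B} := by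
  letI := lowerVietoris P
  apply le_antisymm
  · apply closure_minimal
    · simp
    · rw [← isOpen_compl_iff]
      have hcompl : {A : Closeds P | A ≤ B}ᶜ =
          {A : Closeds P | ((A : Set P) ∩ (↑B)ᶜ).Nonempty} := by
        ext A
        simp only [mem_compl_iff, mem_setOf_eq]
        rw [SetLike.le_def]
        constructor
        · intro h
          push_neg at h
          obtain ⟨z, hz1, hz2⟩ := h
          exact ⟨z, hz1, hz2⟩
        · rintro ⟨z, hz1, hz2⟩ h
          exact hz2 (h hz1)
      rw [hcompl]
      exact isOpen_dia B.isClosed.isOpen_compl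
  · intro A hA
    rw [mem_closure_iff]
    intro o ho hAo
    exact ⟨B, isUpperSet_of_vietoris_open ho hA hAo, rfl⟩

lemma t0_vietoris : @T0Space (Closeds P) (lowerVietoris P) := by
  letI := lowerVietoris P
  rw [t0Space_iff_inseparable]
  intro A B h
  have h1 : A ≤ B := by
    have := h.specializes'.mem_closure
    rwa [vietoris_closure_singleton, mem_setOf_eq] at this
  have h2 : B ≤ A := by
    have := h.specializes.mem_closure
    rwa [vietoris_closure_singleton, mem_setOf_eq] at this
  exact le_antisymm h1 h2

lemma quasiSober_vietoris : @QuasiSober (Closeds P) (lowerVietoris P) := by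
  letI := lowerVietoris P
  constructor
  intro S hirr hclosed
  classical
  set B : Closeds P := sSup S with hB
  have hmeet : ∀ U : Set P, IsOpen U → ((B : Set P) ∩ U).Nonempty →
      ∃ A ∈ S, ((A : Set P) ∩ U).Nonempty := by
    intro U hU hBU
    by_contra hcon
    push_neg at hcon
    have hbound : B ≤ ⟨Uᶜ, hU.isClosed_compl⟩ := by
      refine sSup_le fun A hA => SetLike.le_def.mpr fun z hz => ?_
      intro hzU
      exact Set.eq_empty_iff_forall_notMem.mp (hcon A hA) z ⟨hz, hzU⟩
    obtain ⟨z, hz1, hz2⟩ := hBU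
    exact SetLike.le_def.mp hbound hz1 hz2
  have hBS : B ∈ S := by
    by_contra hBnot
    obtain ⟨t, ⟨f, ⟨hffin, hfsub⟩, rfl⟩, hBt, htsub⟩ :=
      (isTopologicalBasis_of_subbasis
        (rfl : lowerVietoris P = generateFrom _)).exists_subset_of_mem_open
        (show B ∈ Sᶜ from hBnot) hclosed.isOpen_compl
    have hopen : ∀ u ∈ hffin.toFinset, IsOpen u := by
      intro u hu
      rw [Set.Finite.mem_toFinset] at hu
      exact TopologicalSpace.GenerateOpen.basic _ (hfsub hu)
    have hmeets : ∀ u ∈ hffin.toFinset, (S ∩ u).Nonempty := by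
      intro u hu
      rw [Set.Finite.mem_toFinset] at hu
      obtain ⟨U, hU, rfl⟩ := hfsub hu
      obtain ⟨A, hA, hAU⟩ := hmeet U hU (hBt _ hu)
      exact ⟨A, hA, hAU⟩
    obtain ⟨A, hAS, hAt⟩ := isIrreducible_iff_sInter.mp hirr hffin.toFinset hopen hmeets
    rw [Set.Finite.coe_toFinset] at hAt
    exact htsub hAt hAS
  refine ⟨B, ?_⟩
  show closure {B} = S
  rw [vietoris_closure_singleton]
  ext A
  constructor
  · intro hA
    by_contra hAS
    exact (isUpperSet_of_vietoris_open hclosed.isOpen_compl hA hAS) hBS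
  · intro hAS
    exact le_sSup hAS

lemma locallyCompact_vietoris (hcc : CoreCompact P) :
    @LocallyCompactSpace (Closeds P) (lowerVietoris P) := by
  letI := lowerVietoris P
  constructor
  intro A n hn
  classical
  obtain ⟨O, hOsub, hOopen, hAO⟩ := mem_nhds_iff.mp hn
  obtain ⟨t, ⟨f, ⟨hffin, hfsub⟩, rfl⟩, hAt, htsub⟩ :=
    (isTopologicalBasis_of_subbasis
      (rfl : lowerVietoris P = generateFrom _)).exists_subset_of_mem_open hAO hOopen
  choose! U hUopen hUeq using fun u (hu : u ∈ f) => hfsub hu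
  have hx : ∀ u ∈ f, ∃ z, z ∈ (A : Set P) ∩ U u := by
    intro u hu
    have h1 : A ∈ u := hAt _ hu
    rw [hUeq u hu] at h1
    exact h1
  choose x hxA hxU using hx
  have hVex : ∀ u (hu : u ∈ f), ∃ V : Opens P, WayBelow V ⟨U u, hUopen u hu⟩ ∧ x u hu ∈ V := by
    intro u hu
    exact hcc.exists_wayBelow ⟨U u, hUopen u hu⟩ (hxU u hu)
  choose V₁ hV₁wb hxV₁ using hVex
  set V : Set (Closeds P) → Opens P := fun u => if hu : u ∈ f then V₁ u hu else ⊥ with hVdef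
  have hVwb : ∀ u (hu : u ∈ f), WayBelow (V u) ⟨U u, hUopen u hu⟩ := by
    intro u hu
    simp only [hVdef, dif_pos hu]
    exact hV₁wb u hu
  have hxV : ∀ u (hu : u ∈ f), x u hu ∈ V u := by
    intro u hu
    simp only [hVdef, dif_pos hu]
    exact hxV₁ u hu
  set K : Set (Closeds P) :=
    {B : Closeds P | ∀ u ∈ f, ∀ W : Opens P, WayBelow (V u) W → ((B : Set P) ∩ ↑W).Nonempty}
    with hK
  have hKsub : K ⊆ ⋂₀ f := by
    intro B hB u hu
    rw [hUeq u hu]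
    exact hB u hu ⟨U u, hUopen u hu⟩ (hVwb u hu)
  have hdiaK : (⋂ u ∈ f, {B : Closeds P | ((B : Set P) ∩ ↑(V u)).Nonempty}) ⊆ K := by
    intro B hB u hu W hW
    obtain ⟨z, hz1, hz2⟩ := mem_iInter₂.mp hB u hu
    exact ⟨z, hz1, SetLike.le_def.mp hW.le hz2⟩
  refine ⟨K, ?_, subset_trans hKsub (htsub.trans hOsub), ?_⟩
  · refine mem_nhds_iff.mpr ⟨_, hdiaK, ?_, ?_⟩
    · exact hffin.isOpen_biInter fun u hu => isOpen_dia (V u).2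
    · exact mem_iInter₂.mpr fun u hu => ⟨x u hu, hxA u hu, hxV u hu⟩
  · rw [isCompact_iff_ultrafilter_le_nhds]
    intro F hF
    have hKF : K ∈ F := Filter.le_principal_iff.mp hF
    set T : Set P := ⋃₀ {O' : Set P | IsOpen O' ∧
        {B : Closeds P | ((B : Set P) ∩ O').Nonempty} ∉ F} with hT
    have hTopen : IsOpen T := isOpen_sUnion fun O' hO' => hO'.1
    set B₀ : Closeds P := ⟨Tᶜ, hTopen.isClosed_compl⟩ with hB₀
    have hc1 : ∀ O' : Set P, IsOpen O' → ((B₀ : Set P) ∩ O').Nonempty →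
        {B : Closeds P | ((B : Set P) ∩ O').Nonempty} ∈ F := by
      intro O' hO' hne
      by_contra hnot
      obtain ⟨z, hz1, hz2⟩ := hne
      exact hz1 ⟨O', ⟨hO', hnot⟩, hz2⟩
    have hB₀K : B₀ ∈ K := by
      intro u hu W hW
      by_contra hempty
      have hWT : (W : Set P) ⊆ T := by
        intro z hz
        by_contra hzT
        exact hempty ⟨z, hzT, hz⟩
      obtain ⟨V', h1, h2⟩ := hcc.interpolate hW
      set SS : Set (Opens P) :=
        {O' : Opens P | {B : Closeds P | ((B : Set P) ∩ ↑O').Nonempty} ∉ F} with hSS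
      have hbot : ⊥ ∈ SS := by
        have : {B : Closeds P | ((B : Set P) ∩ ↑(⊥ : Opens P)).Nonempty} = ∅ := by
          ext B; simp
        simp only [hSS, mem_setOf_eq, this]
        exact Ultrafilter.empty_notMem
      have hdirSS : DirectedOn (· ≤ ·) SS := by
        intro O₁ h₁ O₂ h₂
        refine ⟨O₁ ⊔ O₂, ?_, le_sup_left, le_sup_right⟩
        have hsplit : {B : Closeds P | ((B : Set P) ∩ ↑(O₁ ⊔ O₂)).Nonempty} =
            {B : Closeds P | ((B : Set P) ∩ ↑O₁).Nonempty} ∪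
              {B : Closeds P | ((B : Set P) ∩ ↑O₂).Nonempty} := by
          ext B
          simp [Opens.coe_sup, inter_union_distrib_left, union_nonempty]
        intro hmem
        rw [hsplit] at hmem
        rcases (Ultrafilter.union_mem_iff.mp hmem) with h | h
        exacts [h₁ h, h₂ h]
      have hW_le : W ≤ sSup SS := by
        refine SetLike.le_def.mpr fun z hz => ?_
        obtain ⟨O', ⟨hO'open, hO'F⟩, hzO'⟩ := hWT hz
        exact Opens.mem_sSup.mpr ⟨⟨O', hO'open⟩, hO'F, hzO'⟩
      obtain ⟨O', hO'SS, hV'O'⟩ := (h2.mono_right hW_le) SS ⟨⊥, hbot⟩ hdirSS _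
        (isLUB_sSup SS) le_rfl
      have hKdia : {B : Closeds P | ((B : Set P) ∩ ↑V').Nonempty} ∈ F :=
        Filter.mem_of_superset hKF fun B hB => hB u hu V' h1
      exact hO'SS (Filter.mem_of_superset hKdia fun B hB =>
        hB.mono (inter_subset_inter_right _ (SetLike.coe_subset_coe.mpr hV'O')))
    refine ⟨B₀, hB₀K, ?_⟩
    rw [le_nhds_iff]
    intro s hBs hsopen
    obtain ⟨t, ⟨g, ⟨hgfin, hgsub⟩, rfl⟩, hBt, htsub⟩ :=
      (isTopologicalBasis_of_subbasis
        (rfl : lowerVietoris P = generateFrom _)).exists_subset_of_mem_open hBs hsopen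
    have hg : ⋂₀ g ∈ (F : Filter (Closeds P)) := by
      rw [Filter.sInter_mem hgfin]
      intro u hu
      obtain ⟨U', hU', rfl⟩ := hgsub hu
      exact hc1 U' hU' (hBt _ hu)
    exact Filter.mem_of_superset hg htsub

end Vietoris

/-- If `(P, σ(P))` is core-compact then on `Γ(P)` the Scott topology coincides with the lower
Vietoris topology, and `(Γ(P), σ(Γ(P)))` is sober and locally compact. -/
theorem scott_eq_lowerVietoris_and_sober_locallyCompact_of_coreCompact
    {P : Type*} [PartialOrder P] [TopologicalSpace P] [Topology.IsScott P Set.univ]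
    (h : CoreCompact P) :
    Topology.scott (TopologicalSpace.Closeds P) Set.univ = lowerVietoris P ∧
    @T0Space (TopologicalSpace.Closeds P) (Topology.scott (TopologicalSpace.Closeds P) Set.univ) ∧
    @QuasiSober (TopologicalSpace.Closeds P)
      (Topology.scott (TopologicalSpace.Closeds P) Set.univ) ∧
    @LocallyCompactSpace (TopologicalSpace.Closeds P)
      (Topology.scott (TopologicalSpace.Closeds P) Set.univ) := by
  have heq := scott_eq_lowerVietoris h
  refine ⟨heq, ?_, ?_, ?_⟩ <;> rw [heq]
  · exact t0_vietoris
  · exact quasiSober_vietoris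
  · exact locallyCompact_vietoris h
end

section
/- Let X = {0} ∪ {1/n : n ∈ ℕ, n ≥ 1} with the subspace topology inherited from the real line ℝ, and let C(X) be the complete lattice of closed subsets of X ordered by inclusion. Then C(X) equipped with the Scott topology is a sober space, but it is not locally compact; in particular the Scott topology on C(X) differs from the lower Vietoris topology: σ(C(X)) ≠ υ(C(X)). -/
open Topology TopologicalSpace Set

/-- The subspace `X = {0} ∪ {1/n : n ≥ 1}` of the real line. -/
def Xspace : Set ℝ := {x : ℝ | x = 0 ∨ ∃ n : ℕ, 0 < n ∧ x = 1 / (n : ℝ)}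

namespace XPf

noncomputable section

abbrev L := TopologicalSpace.Closeds ↥Xspace

def z : ↥Xspace := ⟨0, Or.inl rfl⟩

lemma pt_mem (n : ℕ) : (1 / ((n : ℝ) + 1)) ∈ Xspace :=
  Or.inr ⟨n + 1, Nat.succ_pos n, by push_cast; ring⟩

def pt (n : ℕ) : ↥Xspace := ⟨1 / ((n : ℝ) + 1), pt_mem n⟩

lemma pt_val (n : ℕ) : (pt n : ℝ) = 1 / ((n : ℝ) + 1) := rfl

lemma pt_pos (n : ℕ) : (0 : ℝ) < (pt n : ℝ) := by
  rw [pt_val]; positivity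

lemma pt_ne_z (n : ℕ) : pt n ≠ z := by
  intro h
  have := congrArg (Subtype.val) h
  rw [pt_val] at this
  have hp := pt_pos n
  rw [pt_val] at hp
  simp only [z] at this
  rw [this] at hp
  exact lt_irrefl _ hp

lemma pt_injective : Function.Injective pt := by
  intro a b hab
  have h := congrArg (Subtype.val) hab
  rw [pt_val, pt_val] at h
  have ha : ((a : ℝ) + 1) ≠ 0 := by positivity
  have hb : ((b : ℝ) + 1) ≠ 0 := by positivity
  field_simp at h
  exact_mod_cast (add_right_cancel h.symm)

lemma eq_z_or_pt (x : ↥Xspace) : x = z ∨ ∃ n, x = pt n := by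
  rcases x.2 with h0 | ⟨n, hn, hx⟩
  · left; exact Subtype.ext h0
  · right
    obtain ⟨m, rfl⟩ := Nat.exists_eq_succ_of_ne_zero hn.ne'
    exact ⟨m, Subtype.ext (by rw [pt_val, hx]; push_cast; ring_nf)⟩

lemma val_nonneg (x : ↥Xspace) : (0:ℝ) ≤ (x : ℝ) := by
  rcases eq_z_or_pt x with rfl | ⟨n, rfl⟩
  · exact le_refl 0
  · exact (pt_pos n).le

lemma finite_ge (ε : ℝ) (hε : 0 < ε) : {x : ↥Xspace | ε ≤ (x : ℝ)}.Finite := by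
  have himg : (Subtype.val '' {x : ↥Xspace | ε ≤ (x : ℝ)}) ⊆
      (fun n : ℕ => 1 / ((n:ℝ) + 1)) '' (Set.Iic ⌈1/ε⌉₊) := by
    rintro y ⟨x, hx, rfl⟩
    rcases eq_z_or_pt x with rfl | ⟨n, rfl⟩
    · exact absurd hx (by simp [z]; linarith)
    · refine ⟨n, ?_, rfl⟩
      simp only [Set.mem_Iic]
      have h1 : ε ≤ 1 / ((n:ℝ)+1) := hx
      have h2 : ((n:ℝ) + 1) ≤ 1 / ε := by
        rw [le_div_iff₀ hε]
        have hpos : (0:ℝ) < (n:ℝ)+1 := by positivity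
        rw [le_div_iff₀ hpos] at h1
        linarith
      have := Nat.le_ceil (1/ε)
      have : ((n:ℝ)+1) ≤ (⌈1/ε⌉₊ : ℝ) := le_trans h2 this
      have hn1 : ((n+1 : ℕ) : ℝ) ≤ (⌈1/ε⌉₊ : ℝ) := by push_cast; linarith
      exact le_of_lt (lt_of_lt_of_le (Nat.lt_succ_self n) (by exact_mod_cast hn1))
  have : (Subtype.val '' {x : ↥Xspace | ε ≤ (x : ℝ)}).Finite :=
    Set.Finite.subset ((Set.finite_Iic _).image _) himg
  exact Set.Finite.of_finite_image this (Subtype.val_injective.injOn)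

lemma compl_finite_of_nhds {U : Set ↥Xspace} (hU : U ∈ 𝓝 z) : {x | x ∉ U}.Finite := by
  rw [nhds_subtype_eq_comap] at hU
  obtain ⟨V, hV, hVU⟩ := hU
  obtain ⟨ε, hε, hball⟩ := Metric.mem_nhds_iff.mp hV
  refine (finite_ge ε hε).subset ?_
  intro x hx
  simp only [Set.mem_setOf_eq, not_le] at hx ⊢
  by_contra hlt
  push_neg at hlt
  apply hx
  apply hVU
  apply hball
  simp only [Metric.mem_ball, Real.dist_eq]
  have := val_nonneg x
  have hz : (z : ℝ) = 0 := rfl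
  rw [hz, sub_zero, abs_of_nonneg this]
  exact hlt

lemma exists_tail_subset {U : Set ↥Xspace} (hU : U ∈ 𝓝 z) : ∃ N, ∀ n ≥ N, pt n ∈ U := by
  have h1 : {n : ℕ | pt n ∉ U}.Finite :=
    Set.Finite.preimage (pt_injective.injOn) (compl_finite_of_nhds hU)
  obtain ⟨N, hN⟩ := h1.bddAbove
  refine ⟨N + 1, fun n hn => ?_⟩
  by_contra h
  have := hN h
  omega

lemma isOpen_singleton_pt (n : ℕ) : IsOpen ({pt n} : Set ↥Xspace) := by
  set V : Set ↥Xspace := {x | 1 / ((n:ℝ) + 2) < (x:ℝ)} with hV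
  have hVopen : IsOpen V := by
    have : Continuous (fun x : ↥Xspace => (x : ℝ)) := continuous_subtype_val
    exact isOpen_lt (continuous_const : Continuous fun _ : ↥Xspace => 1 / ((n:ℝ)+2)) this
  have hVfin : V.Finite := by
    refine (finite_ge (1 / ((n:ℝ)+2)) (by positivity)).subset ?_
    intro x hx
    simp only [hV, Set.mem_setOf_eq] at hx
    exact hx.le
  have hmem : pt n ∈ V := by
    simp only [hV, Set.mem_setOf_eq, pt_val]
    exact one_div_lt_one_div_of_lt (by positivity : (0:ℝ) < (n:ℝ)+1) (by linarith)
  have hdiff : IsClosed (V \ {pt n}) := ((hVfin.diff).isClosed)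
  have : ({pt n} : Set ↥Xspace) = V ∩ (V \ {pt n})ᶜ := by
    ext x
    simp only [Set.mem_singleton_iff, Set.mem_inter_iff, Set.mem_compl_iff, Set.mem_diff,
      Set.mem_singleton_iff]
    constructor
    · rintro rfl; exact ⟨hmem, by tauto⟩
    · rintro ⟨hxV, hx⟩; by_contra hne; exact hx ⟨hxV, hne⟩
  rw [this]
  exact hVopen.inter hdiff.isOpen_compl

lemma isOpen_of_z_not_mem {B : Set ↥Xspace} (h : z ∉ B) : IsOpen B := by
  have : B = ⋃ x ∈ B, {x} := by simp
  rw [this]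
  apply isOpen_biUnion
  intro x hx
  rcases eq_z_or_pt x with rfl | ⟨n, rfl⟩
  · exact absurd hx h
  · exact isOpen_singleton_pt n

lemma isClosed_of_z_mem {A : Set ↥Xspace} (h : z ∈ A) : IsClosed A :=
  ⟨isOpen_of_z_not_mem (fun hz => hz h)⟩

lemma closure_subset (A : Set ↥Xspace) : closure A ⊆ A ∪ {z} := by
  intro x hx
  rcases eq_z_or_pt x with rfl | ⟨n, rfl⟩
  · exact Or.inr rfl
  · left
    rw [mem_closure_iff] at hx
    obtain ⟨y, hy1, hy2⟩ := hx _ (isOpen_singleton_pt n) rfl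
    rwa [Set.mem_singleton_iff.mp hy1] at hy2

lemma mem_of_closure_of_ne_z {A : Set ↥Xspace} {x : ↥Xspace} (hx : x ∈ closure A) (hne : x ≠ z) :
    x ∈ A := by
  rcases closure_subset A hx with h | h
  · exact h
  · exact absurd h hne

lemma z_mem_closure {A : Set ↥Xspace} (h : A.Infinite) : z ∈ closure A := by
  rw [mem_closure_iff_nhds]
  intro U hU
  by_contra hc
  rw [Set.not_nonempty_iff_eq_empty] at hc
  have : A ⊆ {x | x ∉ U} := by
    intro x hxA
    by_contra hxU
    simp only [Set.mem_setOf_eq, not_not] at hxU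
    exact absurd hc (Set.nonempty_iff_ne_empty.mp ⟨x, hxU, hxA⟩)
  exact h ((compl_finite_of_nhds hU).subset this)

lemma z_mem_of_infinite (A : L) (h : ¬ (A : Set ↥Xspace).Finite) : z ∈ A := by
  have := z_mem_closure (h : (A : Set ↥Xspace).Infinite)
  rwa [A.isClosed.closure_eq] at this


section ScottPart

lemma mem_closeds_iff {c : L} {x : ↥Xspace} : x ∈ c ↔ x ∈ (c : Set ↥Xspace) := Iff.rfl

lemma coe_subset_sUnion {d : Set L} {c : L} (h : c ∈ d) :
    (c : Set ↥Xspace) ⊆ ⋃₀ (SetLike.coe '' d) :=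
  Set.subset_sUnion_of_mem ⟨c, h, rfl⟩

lemma mem_sUnion_iff {d : Set L} {x : ↥Xspace} :
    x ∈ ⋃₀ (SetLike.coe '' d) ↔ ∃ c ∈ d, x ∈ c := by
  simp only [Set.mem_sUnion, Set.mem_image]
  constructor
  · rintro ⟨t, ⟨c, hc, rfl⟩, hx⟩; exact ⟨c, hc, hx⟩
  · rintro ⟨c, hc, hx⟩; exact ⟨c, ⟨c, hc, rfl⟩, hx⟩

lemma directed_subset {d : Set L} (hdir : DirectedOn (· ≤ ·) d) (hne : d.Nonempty)
    {G : Set ↥Xspace} (hG : G.Finite) (hsub : G ⊆ ⋃₀ (SetLike.coe '' d)) :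
    ∃ c ∈ d, G ⊆ (c : Set ↥Xspace) := by
  refine Set.Finite.induction_on
    (motive := fun G _ => G ⊆ ⋃₀ (SetLike.coe '' d) → ∃ c ∈ d, G ⊆ (c : Set ↥Xspace))
    G hG (fun _ => ⟨hne.some, hne.some_mem, Set.empty_subset _⟩) ?_ hsub
  intro x F hxF hF ih hsub'
  obtain ⟨c₁, hc₁, hFc₁⟩ := ih ((Set.subset_insert x F).trans hsub')
  obtain ⟨c₂, hc₂, hxc₂⟩ := mem_sUnion_iff.mp (hsub' (Set.mem_insert x F))
  obtain ⟨c₃, hc₃, h₁₃, h₂₃⟩ := hdir c₁ hc₁ c₂ hc₂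
  refine ⟨c₃, hc₃, ?_⟩
  rw [Set.insert_subset_iff]
  exact ⟨h₂₃ hxc₂, hFc₁.trans h₁₃⟩

/-- The Scott-open sets `U_g`. -/
def Ug (g : ℕ → ℕ) : Set L :=
  {A | z ∈ A ∨ ∃ n, pt n ∈ A ∧ g n ≤ (A : Set ↥Xspace).ncard}

lemma lub_coe {d : Set L} {a : L} (hlub : IsLUB d a) :
    (a : Set ↥Xspace) = closure (⋃₀ (SetLike.coe '' d)) := by
  rw [← hlub.sSup_eq, Closeds.coe_sSup]

lemma isOpen_Ug (g : ℕ → ℕ) : IsOpen[Topology.scott L Set.univ] (Ug g) := by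
  letI := Topology.scott L Set.univ
  haveI : Topology.IsScott L Set.univ := ⟨rfl⟩
  rw [Topology.IsScott.isOpen_iff_isUpperSet_and_dirSupInaccOn (D := Set.univ)]
  constructor
  · intro A B hAB hA
    rcases hA with hz | ⟨n, hn, hcard⟩
    · exact Or.inl (hAB hz)
    by_cases hB : (B : Set ↥Xspace).Finite
    · exact Or.inr ⟨n, hAB hn, hcard.trans (Set.ncard_le_ncard hAB hB)⟩
    · exact Or.inl (z_mem_of_infinite B hB)
  · intro d _ hne hdir a hlub ha
    have hcoe : (a : Set ↥Xspace) = closure (⋃₀ (SetLike.coe '' d)) := lub_coe hlub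
    set S := ⋃₀ (SetLike.coe '' d) with hS
    have key : ∀ n : ℕ, pt n ∈ S → S.Infinite → (d ∩ Ug g).Nonempty := by
      intro n hpn hSinf
      obtain ⟨t, hts, htfin, htcard⟩ :=
        (hSinf.diff (Set.finite_singleton (pt n))).exists_subset_ncard_eq (g n)
      obtain ⟨c, hcd, hGc⟩ := directed_subset hdir hne (htfin.insert (pt n))
        (by
          rw [Set.insert_subset_iff]
          exact ⟨hpn, (hts.trans (Set.diff_subset))⟩)
      refine ⟨c, hcd, ?_⟩
      by_cases hcfin : (c : Set ↥Xspace).Finite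
      · refine Or.inr ⟨n, hGc (Set.mem_insert _ _), ?_⟩
        rw [← htcard]
        exact Set.ncard_le_ncard (fun y hy => hGc (Set.mem_insert_of_mem _ hy)) hcfin
      · exact Or.inl (z_mem_of_infinite c hcfin)
    rcases ha with hz | ⟨n, hn, hcard⟩
    · have hz' : z ∈ closure S := by rw [← hcoe]; exact hz
      by_cases hzS : z ∈ S
      · obtain ⟨c, hcd, hzc⟩ := mem_sUnion_iff.mp hzS
        exact ⟨c, hcd, Or.inl hzc⟩
      · have hSinf : S.Infinite := by
          intro hfin
          rw [hfin.isClosed.closure_eq] at hz'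
          exact hzS hz'
        obtain ⟨x, hxS⟩ := hSinf.nonempty
        rcases eq_z_or_pt x with rfl | ⟨n, rfl⟩
        · exact absurd hxS hzS
        · exact key n hxS hSinf
    · have hn' : pt n ∈ closure S := by rw [← hcoe]; exact hn
      have hnS : pt n ∈ S := mem_of_closure_of_ne_z hn' (pt_ne_z n)
      by_cases hSinf : S.Infinite
      · exact key n hnS hSinf
      · have hfin : S.Finite := Set.not_infinite.mp hSinf
        obtain ⟨c, hcd, hSc⟩ := directed_subset hdir hne hfin (le_refl S)
        have hceq : (c : Set ↥Xspace) = S := Set.Subset.antisymm (coe_subset_sUnion hcd) hSc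
        refine ⟨c, hcd, Or.inr ⟨n, ?_, ?_⟩⟩
        · rw [mem_closeds_iff, hceq]; exact hnS
        · rw [hceq, ← hfin.isClosed.closure_eq, ← hcoe]
          exact hcard

lemma isOpen_upF {F : Set ↥Xspace} (hF : F.Finite) (hzF : z ∉ F) :
    IsOpen[Topology.scott L Set.univ] {A : L | F ⊆ (A : Set ↥Xspace)} := by
  letI := Topology.scott L Set.univ
  haveI : Topology.IsScott L Set.univ := ⟨rfl⟩
  rw [Topology.IsScott.isOpen_iff_isUpperSet_and_dirSupInaccOn (D := Set.univ)]
  constructor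
  · intro A B hAB hA
    exact Set.Subset.trans hA hAB
  · intro d _ hne hdir a hlub ha
    have hcoe : (a : Set ↥Xspace) = closure (⋃₀ (SetLike.coe '' d)) := lub_coe hlub
    have hFS : F ⊆ ⋃₀ (SetLike.coe '' d) := by
      intro x hx
      have : x ∈ closure (⋃₀ (SetLike.coe '' d)) := by rw [← hcoe]; exact ha hx
      refine mem_of_closure_of_ne_z this ?_
      rintro rfl; exact hzF hx
    obtain ⟨c, hcd, hFc⟩ := directed_subset hdir hne hF hFS
    exact ⟨c, hcd, hFc⟩

lemma isOpen_W1 : IsOpen[Topology.scott L Set.univ] {A : L | (A : Set ↥Xspace).Nonempty} := by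
  letI := Topology.scott L Set.univ
  haveI : Topology.IsScott L Set.univ := ⟨rfl⟩
  rw [Topology.IsScott.isOpen_iff_isUpperSet_and_dirSupInaccOn (D := Set.univ)]
  constructor
  · intro A B hAB hA
    exact hA.mono hAB
  · intro d _ hne hdir a hlub ha
    have hcoe : (a : Set ↥Xspace) = closure (⋃₀ (SetLike.coe '' d)) := lub_coe hlub
    rw [Set.mem_setOf_eq, hcoe] at ha
    rw [closure_nonempty_iff] at ha
    obtain ⟨x, hx⟩ := ha
    obtain ⟨c, hcd, hxc⟩ := mem_sUnion_iff.mp hx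
    exact ⟨c, hcd, ⟨x, hxc⟩⟩

end ScottPart

section Main

/-- The closed set `{z}` as an element of `L`. -/
def Az : L := ⟨{z}, isClosed_of_z_mem rfl⟩

lemma z_mem_Az : z ∈ Az := rfl

lemma singleton_pt_closeds (n : ℕ) : IsClosed ({pt n} : Set ↥Xspace) :=
  (Set.finite_singleton _).isClosed

lemma not_locallyCompact : ¬ @LocallyCompactSpace L (Topology.scott L Set.univ) := by
  intro hloc
  letI := Topology.scott L Set.univ
  haveI : Topology.IsScott L Set.univ := ⟨rfl⟩
  have hW1 : IsOpen {A : L | (A : Set ↥Xspace).Nonempty} := isOpen_W1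
  have hAzW1 : Az ∈ {A : L | (A : Set ↥Xspace).Nonempty} := ⟨z, rfl⟩
  obtain ⟨K, hKnhds, hKW1, hKcomp⟩ := local_compact_nhds (hW1.mem_nhds hAzW1)
  have hUopen : IsOpen (interior K) := isOpen_interior
  have hAzU : Az ∈ interior K := mem_interior_iff_mem_nhds.mpr hKnhds
  have hupper : IsUpperSet (interior K) := Topology.IsScott.isUpperSet_of_isOpen (D := Set.univ) hUopen
  -- richness: interior K contains finite sets supported arbitrarily far out
  have rich : ∀ m : ℕ, ∃ B : L, B ∈ interior K ∧ (B : Set ↥Xspace).Finite ∧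
      (B : Set ↥Xspace) ⊆ pt '' (Set.Ici m) := by
    intro m
    set d : Set L := {B : L | (B : Set ↥Xspace).Finite ∧ (B : Set ↥Xspace) ⊆ pt '' (Set.Ici m)}
      with hd
    have hne : d.Nonempty := ⟨⊥, by simp [hd, Closeds.coe_bot]⟩
    have hdir : DirectedOn (· ≤ ·) d := by
      rintro B₁ h₁ B₂ h₂
      refine ⟨B₁ ⊔ B₂, ⟨?_, ?_⟩, le_sup_left, le_sup_right⟩
      · rw [Closeds.coe_sup]; exact h₁.1.union h₂.1
      · rw [Closeds.coe_sup]; exact Set.union_subset h₁.2 h₂.2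
    have hsub : pt '' (Set.Ici m) ⊆ ⋃₀ (SetLike.coe '' d) := by
      rintro x ⟨n, hn, rfl⟩
      refine mem_sUnion_iff.mpr ⟨⟨{pt n}, singleton_pt_closeds n⟩, ⟨?_, ?_⟩, rfl⟩
      · exact Set.finite_singleton _
      · exact Set.singleton_subset_iff.mpr ⟨n, hn, rfl⟩
    have himg : (pt '' (Set.Ici m)).Infinite :=
      Set.Infinite.image (Set.injOn_of_injective pt_injective) (Set.Ici_infinite m)
    have hzclos : z ∈ closure (⋃₀ (SetLike.coe '' d)) := by
      apply closure_mono hsub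
      exact z_mem_closure himg
    have hsupU : sSup d ∈ interior K := by
      have : Az ≤ sSup d := by
        intro x hx
        rw [Set.mem_singleton_iff.mp hx]
        show z ∈ ((sSup d : L) : Set ↥Xspace)
        rw [Closeds.coe_sSup]
        exact hzclos
      exact hupper this hAzU
    have hinacc := (Topology.IsScott.isOpen_iff_isUpperSet_and_dirSupInaccOn
      (D := Set.univ)).mp hUopen |>.2
    obtain ⟨B, hBd, hBU⟩ := hinacc (Set.mem_univ d) hne hdir (isLUB_sSup d) hsupU
    exact ⟨B, hBU, hBd.1, hBd.2⟩
  choose B hBU hBfin hBsub using rich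
  set g : ℕ → ℕ := fun n => 1 + Finset.sup (Finset.range (n+1)) (fun m => (B m : Set ↥Xspace).ncard)
    with hg
  have hBnot : ∀ m, B m ∉ Ug g := by
    intro m hm
    rcases hm with hz | ⟨n, hn, hcard⟩
    · obtain ⟨k, _, hk⟩ := hBsub m hz
      exact pt_ne_z k hk
    · obtain ⟨k, hk, hkeq⟩ := hBsub m hn
      have hmn : m ≤ n := by
        have h1 := pt_injective hkeq
        have h2 : m ≤ k := hk
        omega
      have h1 : (B m : Set ↥Xspace).ncard ≤
          Finset.sup (Finset.range (n+1)) (fun m => (B m : Set ↥Xspace).ncard) :=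
        Finset.le_sup (f := fun m => (B m : Set ↥Xspace).ncard) (Finset.mem_range.mpr (by omega))
      have hcard' : 1 + Finset.sup (Finset.range (n+1))
          (fun m => (B m : Set ↥Xspace).ncard) ≤ (B m : Set ↥Xspace).ncard := hcard
      omega
  -- the cover
  set f : Option ℕ → Set L := fun i => match i with
    | none => Ug g
    | some k => {A : L | ({pt k} : Set ↥Xspace) ⊆ (A : Set ↥Xspace)}
    with hf
  have hfopen : ∀ i, IsOpen (f i) := by
    rintro (_ | k)
    · exact isOpen_Ug g
    · exact isOpen_upF (Set.finite_singleton _) (fun h => pt_ne_z k (Set.mem_singleton_iff.mp h).symm)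
  have hcover : K ⊆ ⋃ i, f i := by
    intro A hA
    obtain ⟨x, hx⟩ := hKW1 hA
    rcases eq_z_or_pt x with rfl | ⟨k, rfl⟩
    · exact Set.mem_iUnion.mpr ⟨none, Or.inl hx⟩
    · exact Set.mem_iUnion.mpr ⟨some k, Set.singleton_subset_iff.mpr hx⟩
  obtain ⟨t, ht⟩ := hKcomp.elim_finite_subcover f hfopen hcover
  set m : ℕ := 1 + Finset.sup t (fun i => Option.getD i 0) with hm
  have hBm : B m ∈ K := interior_subset (hBU m)
  obtain ⟨i, hit, hBi⟩ := Set.mem_iUnion₂.mp (ht hBm)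
  match i with
  | none => exact hBnot m hBi
  | some k =>
    have hk : pt k ∈ B m := Set.singleton_subset_iff.mp hBi
    obtain ⟨j, hj, hjeq⟩ := hBsub m hk
    have : m ≤ k := by
      have h1 := pt_injective hjeq
      have h2 : m ≤ j := hj
      omega
    have hk2 : k ≤ Finset.sup t (fun i => Option.getD i 0) :=
      Finset.le_sup (f := fun i => Option.getD i 0) hit
    omega

lemma scott_ne_lowerVietoris : Topology.scott L Set.univ ≠ lowerVietoris ↥Xspace := by
  intro heq
  set g : ℕ → ℕ := fun _ => 2 with hg
  have hUg : IsOpen[lowerVietoris ↥Xspace] (Ug g) := heq ▸ isOpen_Ug g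
  have hgen : TopologicalSpace.GenerateOpen
      {S | ∃ U : Set ↥Xspace, IsOpen U ∧
        S = {A : L | ((A : Set ↥Xspace) ∩ U).Nonempty}} (Ug g) := hUg
  have inv : ∀ V : Set L, TopologicalSpace.GenerateOpen
      {S | ∃ U : Set ↥Xspace, IsOpen U ∧
        S = {A : L | ((A : Set ↥Xspace) ∩ U).Nonempty}} V → Az ∈ V →
      ∃ N, ∀ n ≥ N, (⟨{pt n}, singleton_pt_closeds n⟩ : L) ∈ V := by
    intro V hV
    induction hV with
    | basic V hVmem =>
      intro hAz
      obtain ⟨O, hO, rfl⟩ := hVmem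
      obtain ⟨x, hx1, hx2⟩ := hAz
      rw [Set.mem_singleton_iff.mp hx1] at hx2
      obtain ⟨N, hN⟩ := exists_tail_subset (hO.mem_nhds hx2)
      exact ⟨N, fun n hn => ⟨pt n, rfl, hN n hn⟩⟩
    | univ => exact fun _ => ⟨0, fun _ _ => trivial⟩
    | inter V₁ V₂ h₁ h₂ ih₁ ih₂ =>
      intro hAz
      obtain ⟨N₁, hN₁⟩ := ih₁ hAz.1
      obtain ⟨N₂, hN₂⟩ := ih₂ hAz.2
      exact ⟨max N₁ N₂, fun n hn =>
        ⟨hN₁ n (le_trans (le_max_left _ _) hn), hN₂ n (le_trans (le_max_right _ _) hn)⟩⟩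
    | sUnion Ss hSs ih =>
      rintro ⟨V, hVS, hAzV⟩
      obtain ⟨N, hN⟩ := ih V hVS hAzV
      exact ⟨N, fun n hn => ⟨V, hVS, hN n hn⟩⟩
  have hAzUg : Az ∈ Ug g := Or.inl rfl
  obtain ⟨N, hN⟩ := inv _ hgen hAzUg
  have := hN N (le_refl N)
  rcases this with hz | ⟨n, hn, hcard⟩
  · exact pt_ne_z N ((Set.mem_singleton_iff.mp hz).symm ▸ rfl : pt N = z)
  · have hcard' : (2:ℕ) ≤ ({pt N} : Set ↥Xspace).ncard := hcard
    rw [Set.ncard_singleton] at hcard'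
    omega

lemma quasiSober_scott : @QuasiSober L (Topology.scott L Set.univ) := by
  letI := Topology.scott L Set.univ
  haveI : Topology.IsScott L Set.univ := ⟨rfl⟩
  constructor
  intro S hirr hcl
  have hlow : IsLowerSet S := Topology.IsScott.isLowerSet_of_isClosed hcl
  set T : Set ↥Xspace := ⋃ c ∈ S, (c : Set ↥Xspace) with hT
  have hTmem : ∀ x : ↥Xspace, x ∈ T ↔ ∃ c ∈ S, x ∈ c := by
    intro x; simp [hT]
  have hcS : ∀ c : L, c ∈ S → (c : Set ↥Xspace) ⊆ T := by
    intro c hc x hx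
    exact (hTmem x).mpr ⟨c, hc, hx⟩
  have sub1 : ∀ F : Set ↥Xspace, F.Finite → z ∉ F → F ⊆ T →
      (S ∩ {A : L | F ⊆ (A : Set ↥Xspace)}).Nonempty := by
    intro F hF
    refine Set.Finite.induction_on
      (motive := fun F _ => z ∉ F → F ⊆ T → (S ∩ {A : L | F ⊆ (A : Set ↥Xspace)}).Nonempty)
      F hF ?_ ?_
    · intro _ _
      obtain ⟨c, hc⟩ := hirr.1
      exact ⟨c, hc, Set.empty_subset _⟩
    · intro x F hxF hFfin ih hz hsub
      have hz' : z ∉ F := fun h => hz (Set.mem_insert_of_mem _ h)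
      have hxz : x ≠ z := fun h => hz (h ▸ Set.mem_insert x F)
      have hzx : z ∉ ({x} : Set ↥Xspace) := fun h => hxz (Set.mem_singleton_iff.mp h).symm
      obtain ⟨A₁, hA₁S, hA₁⟩ := ih hz' ((Set.subset_insert x F).trans hsub)
      obtain ⟨c₂, hc₂S, hxc₂⟩ := (hTmem x).mp (hsub (Set.mem_insert x F))
      obtain ⟨A, hAS, hAu, hAv⟩ := hirr.2 _ _ (isOpen_upF hFfin hz')
        (isOpen_upF (Set.finite_singleton x) hzx)
        ⟨A₁, hA₁S, hA₁⟩ ⟨c₂, hc₂S, Set.singleton_subset_iff.mpr hxc₂⟩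
      refine ⟨A, hAS, ?_⟩
      rw [Set.mem_setOf_eq, Set.insert_subset_iff]
      exact ⟨Set.singleton_subset_iff.mp hAv, hAu⟩
  have sub2 : ∀ (F : Set ↥Xspace) (hFfin : F.Finite), z ∉ F → F ⊆ T →
      (⟨F, hFfin.isClosed⟩ : L) ∈ S := by
    intro F hFfin hz hsub
    obtain ⟨A, hAS, hFA⟩ := sub1 F hFfin hz hsub
    exact hlow (hFA : (⟨F, hFfin.isClosed⟩ : L) ≤ A) hAS
  -- the directed family of finite subsets of `T \ {z}`
  set DD : Set L := {A : L | (A : Set ↥Xspace).Finite ∧ (A : Set ↥Xspace) ⊆ T \ {z}} with hDD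
  have hDDS : DD ⊆ S := by
    rintro A ⟨hfin, hsub⟩
    have hz : z ∉ (A : Set ↥Xspace) := fun h => (hsub h).2 rfl
    have hTs : (A : Set ↥Xspace) ⊆ T := hsub.trans Set.diff_subset
    have := sub2 (A : Set ↥Xspace) hfin hz hTs
    have heq : (⟨(A : Set ↥Xspace), hfin.isClosed⟩ : L) = A := by
      apply SetLike.coe_injective; rfl
    rwa [heq] at this
  have hDDne : DD.Nonempty := ⟨⊥, by simp [hDD, Closeds.coe_bot]⟩
  have hDDdir : DirectedOn (· ≤ ·) DD := by
    rintro B₁ h₁ B₂ h₂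
    refine ⟨B₁ ⊔ B₂, ⟨?_, ?_⟩, le_sup_left, le_sup_right⟩
    · rw [Closeds.coe_sup]; exact h₁.1.union h₂.1
    · rw [Closeds.coe_sup]; exact Set.union_subset h₁.2 h₂.2
  have hA₁S : sSup DD ∈ S :=
    Topology.IsScott.dirSupClosed_of_isClosed hcl hDDS hDDne hDDdir (isLUB_sSup DD)
  have hunion : ⋃₀ (SetLike.coe '' DD) = T \ {z} := by
    apply Set.Subset.antisymm
    · rintro x ⟨t, ⟨A, hA, rfl⟩, hx⟩
      exact hA.2 hx
    · intro x hx
      have hxz : x ≠ z := fun h => hx.2 (h ▸ rfl)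
      refine mem_sUnion_iff.mpr ⟨⟨{x}, (Set.finite_singleton x).isClosed⟩, ⟨?_, ?_⟩, rfl⟩
      · exact Set.finite_singleton x
      · exact Set.singleton_subset_iff.mpr hx
  have hA₁coe : ((sSup DD : L) : Set ↥Xspace) = closure (T \ {z}) := by
    rw [Closeds.coe_sSup, hunion]
  -- the generic point
  set a : L := ⟨closure T, isClosed_closure⟩ with ha
  have haS : a ∈ S := by
    by_cases hzT : z ∈ T
    · have hclT : closure T = T := by
        apply Set.Subset.antisymm
        · intro x hx
          rcases closure_subset T hx with h | h
          · exact h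
          · rw [Set.mem_singleton_iff.mp h]; exact hzT
        · exact subset_closure
      by_cases hinf : (T \ {z}).Infinite
      · have : closure (T \ {z}) = T := by
          apply Set.Subset.antisymm
          · intro x hx
            rcases closure_subset _ hx with h | h
            · exact h.1
            · rw [Set.mem_singleton_iff.mp h]; exact hzT
          · intro x hx
            by_cases hxz : x = z
            · rw [hxz]; exact z_mem_closure hinf
            · exact subset_closure ⟨hx, hxz⟩
        have : a = sSup DD := by
          apply SetLike.coe_injective
          rw [hA₁coe, this]
          show closure T = T
          exact hclT
        rw [this]; exact hA₁S
      · have hfin : (T \ {z}).Finite := Set.not_infinite.mp hinf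
        have hTfin : T.Finite := by
          have : T ⊆ insert z (T \ {z}) := by
            intro x hx
            by_cases hxz : x = z
            · rw [hxz]; exact Set.mem_insert z _
            · exact Set.mem_insert_of_mem _ ⟨hx, hxz⟩
          exact (hfin.insert z).subset this
        obtain ⟨cz, hczS, hzcz⟩ := (hTmem z).mp hzT
        set k : ℕ := (T \ {z}).ncard with hk
        obtain ⟨A, hAS, hAu, hAv⟩ := hirr.2 _ _
          (isOpen_upF hfin (fun h => h.2 rfl)) (isOpen_Ug (fun _ => k + 1))
          ⟨⟨T \ {z}, hfin.isClosed⟩, sub2 _ hfin (fun h => h.2 rfl) Set.diff_subset,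
            Set.Subset.rfl⟩
          ⟨cz, hczS, Or.inl hzcz⟩
        have hAT : (A : Set ↥Xspace) ⊆ T := hcS A hAS
        by_cases hzA : z ∈ A
        · have : (A : Set ↥Xspace) = T := by
            apply Set.Subset.antisymm hAT
            intro x hx
            by_cases hxz : x = z
            · rw [hxz]; exact hzA
            · exact hAu ⟨hx, hxz⟩
          have haA : a = A := by
            apply SetLike.coe_injective
            show closure T = (A : Set ↥Xspace)
            rw [this, hclT]
          rw [haA]; exact hAS
        · exfalso
          rcases hAv with h | ⟨n, hn, hcard⟩
          · exact hzA h
          · have hsub' : (A : Set ↥Xspace) ⊆ T \ {z} := by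
              intro x hx
              exact ⟨hAT hx, fun h => hzA (h ▸ hx)⟩
            have h2 : (A : Set ↥Xspace).ncard ≤ k := Set.ncard_le_ncard hsub' hfin
            have h3 : k + 1 ≤ (A : Set ↥Xspace).ncard := hcard
            omega
    · have hTz : T \ {z} = T := Set.diff_singleton_eq_self hzT
      have : a = sSup DD := by
        apply SetLike.coe_injective
        rw [hA₁coe, hTz]
        rfl
      rw [this]; exact hA₁S
  refine ⟨a, ?_⟩
  show closure {a} = S
  apply Set.Subset.antisymm
  · exact closure_minimal (Set.singleton_subset_iff.mpr haS) hcl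
  · intro c hc
    have hca : c ≤ a := by
      intro x hx
      exact subset_closure (hcS c hc hx)
    have hlow' : IsLowerSet (closure {a}) :=
      Topology.IsScott.isLowerSet_of_isClosed isClosed_closure
    exact hlow' hca (subset_closure rfl)

end Main

end
end XPf


/-- For `X = {0} ∪ {1/n : n ≥ 1} ⊆ ℝ` with the subspace topology, the lattice `C(X)` of closed
subsets of `X` equipped with the Scott topology is sober, but not locally compact; in particular
the Scott topology on `C(X)` differs from the lower Vietoris topology. -/
theorem closeds_of_one_over_n_scott_sober_not_locallyCompact :
    (@T0Space (TopologicalSpace.Closeds Xspace)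
        (Topology.scott (TopologicalSpace.Closeds Xspace) Set.univ) ∧
      @QuasiSober (TopologicalSpace.Closeds Xspace)
        (Topology.scott (TopologicalSpace.Closeds Xspace) Set.univ)) ∧
    ¬ @LocallyCompactSpace (TopologicalSpace.Closeds Xspace)
        (Topology.scott (TopologicalSpace.Closeds Xspace) Set.univ) ∧
    Topology.scott (TopologicalSpace.Closeds Xspace) Set.univ ≠ lowerVietoris Xspace := by
  refine ⟨⟨?_, XPf.quasiSober_scott⟩, XPf.not_locallyCompact, XPf.scott_ne_lowerVietoris⟩
  letI := Topology.scott (TopologicalSpace.Closeds ↥Xspace) Set.univ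
  haveI : Topology.IsScott (TopologicalSpace.Closeds ↥Xspace) Set.univ := ⟨rfl⟩
  infer_instance
end

section
/- Let Y be a T₁ topological space and let C(Y) denote the complete lattice of closed subsets of Y ordered by inclusion. If the Scott topology on C(Y) coincides with the lower Vietoris topology, σ(C(Y)) = υ(C(Y)), then Y carries the discrete topology. -/
open Topology TopologicalSpace Set

/-- If `Y` is a `T₁` space such that on the lattice `C(Y)` of closed subsets of `Y` the Scott
topology coincides with the lower Vietoris topology, then `Y` is discrete. -/
theorem discrete_of_t1_scott_eq_lowerVietoris
    {Y : Type*} [TopologicalSpace Y] [T1Space Y]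
    (h : Topology.scott (TopologicalSpace.Closeds Y) Set.univ = lowerVietoris Y) :
    DiscreteTopology Y := by
  rw [discreteTopology_iff_isOpen_singleton]
  intro y
  -- the set of subsingleton closed sets avoiding `y`
  set 𝒞 : Set (Closeds Y) := {A | (A : Set Y).Subsingleton ∧ y ∉ (A : Set Y)} with h𝒞
  -- its complement is Scott open
  have hscott : IsOpen[Topology.scott (Closeds Y) Set.univ] 𝒞ᶜ := by
    letI := Topology.scott (Closeds Y) Set.univ
    haveI : Topology.IsScott (Closeds Y) Set.univ := ⟨rfl⟩
    rw [← @isClosed_compl_iff, compl_compl,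
        Topology.IsScott.isClosed_iff_isLowerSet_and_dirSupClosed]
    refine ⟨fun A B hBA hA => ⟨hA.1.anti hBA, fun hy => hA.2 (hBA hy)⟩, ?_⟩
    intro d hds hd hdir a ha
    -- the union of the carriers is a subsingleton avoiding y
    have hsub : (⋃ A ∈ d, (A : Set Y)).Subsingleton := by
      rintro p hp q hq
      simp only [mem_iUnion] at hp hq
      obtain ⟨A, hA, hpA⟩ := hp
      obtain ⟨B, hB, hqB⟩ := hq
      obtain ⟨E, hE, hAE, hBE⟩ := hdir A hA B hB
      exact (hds hE).1 (hAE hpA) (hBE hqB)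
    have hy : y ∉ (⋃ A ∈ d, (A : Set Y)) := by
      simp only [mem_iUnion, not_exists]
      exact fun A hA hyA => (hds hA).2 hyA
    -- closure of that union is a closed upper bound
    set b : Closeds Y := ⟨closure (⋃ A ∈ d, (A : Set Y)), isClosed_closure⟩ with hb
    have hub : b ∈ upperBounds d := by
      intro A hA
      exact fun x hx => subset_closure (mem_iUnion₂_of_mem hA hx)
    have hab : a ≤ b := ha.2 hub
    have hclsub : (closure (⋃ A ∈ d, (A : Set Y))).Subsingleton := hsub.closure
    have hycl : y ∉ closure (⋃ A ∈ d, (A : Set Y)) := by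
      intro hy'
      rcases (⋃ A ∈ d, (A : Set Y)).eq_empty_or_nonempty with he | ⟨z, hz⟩
      · rw [he, closure_empty] at hy'; exact hy'
      · have : y = z := hclsub hy' (subset_closure hz)
        exact hy (this ▸ hz)
    exact ⟨hclsub.anti hab, fun hy' => hycl (hab hy')⟩
  rw [h] at hscott
  -- use the basis of finite intersections for the lower Vietoris topology
  letI := lowerVietoris Y
  have hbasis := TopologicalSpace.isTopologicalBasis_of_subbasis
    (t := lowerVietoris Y)
    (s := {S | ∃ U : Set Y, IsOpen U ∧
      S = {A : Closeds Y | ((A : Set Y) ∩ U).Nonempty}}) rfl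
  have hy𝒞 : (⟨{y}, isClosed_singleton⟩ : Closeds Y) ∈ 𝒞ᶜ := by
    intro hmem
    exact hmem.2 (by simp)
  obtain ⟨B, ⟨f, ⟨hffin, hfsub⟩, rfl⟩, hyB, hB⟩ :=
    hbasis.exists_subset_of_mem_open hy𝒞 hscott
  -- extract the open sets
  choose U hUopen hUeq using fun s (hs : s ∈ f) => hfsub hs
  haveI : Finite f := hffin
  set V : Set Y := ⋂ (s : f), U s s.2 with hV
  have hVopen : IsOpen V := isOpen_iInter_of_finite fun s => hUopen s s.2
  have hyV : y ∈ V := by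
    refine mem_iInter.2 fun ⟨s, hs⟩ => ?_
    have hys : (⟨{y}, isClosed_singleton⟩ : Closeds Y) ∈ s := Set.mem_sInter.1 hyB s hs
    rw [hUeq s hs] at hys
    obtain ⟨q, hq1, hq2⟩ := hys
    have : q = y := hq1
    exact this ▸ hq2
  have hVy : V ⊆ {y} := by
    intro z hz
    by_contra hzy
    have hzne : z ≠ y := hzy
    have hz𝒞 : (⟨{z}, isClosed_singleton⟩ : Closeds Y) ∈ 𝒞 :=
      ⟨subsingleton_singleton, by simpa using hzne.symm⟩
    have hzB : (⟨{z}, isClosed_singleton⟩ : Closeds Y) ∈ ⋂₀ f := by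
      refine Set.mem_sInter.2 fun s hs => ?_
      rw [hUeq s hs]
      exact ⟨z, rfl, mem_iInter.1 hz (⟨s, hs⟩ : f)⟩
    exact hB hzB hz𝒞
  have : ({y} : Set Y) = V := (singleton_subset_iff.2 hyV).antisymm hVy
  rw [this]
  exact hVopen
end

section
/- Let P be a poset. Then P is a continuous poset if and only if the complete lattice Γ(P) of Scott closed subsets of P (ordered by inclusion) is a continuous lattice. -/
open Topology TopologicalSpace Set

section Generic

variable {α : Type*} [Preorder α]

lemma wayBelow_le_s10 {a b : α} (h : WayBelow a b) : a ≤ b := by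
  obtain ⟨z, hz, haz⟩ := h {b} ⟨b, rfl⟩ (directedOn_singleton b) b
    isLUB_singleton le_rfl
  rw [Set.mem_singleton_iff] at hz
  exact hz ▸ haz

lemma wayBelow_mono {a a' b b' : α} (ha : a' ≤ a) (h : WayBelow a b) (hb : b ≤ b') :
    WayBelow a' b' := by
  intro d hd hdir s hs hb's
  obtain ⟨z, hz, haz⟩ := h d hd hdir s hs (hb.trans hb's)
  exact ⟨z, hz, ha.trans haz⟩

lemma wayBelow_bot {β : Type*} [Preorder β] [OrderBot β] {b : β} : WayBelow (⊥ : β) b := by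
  intro d hd _ s _ _
  obtain ⟨z, hz⟩ := hd
  exact ⟨z, hz, bot_le⟩

lemma wayBelow_sup {β : Type*} [SemilatticeSup β] {a₁ a₂ b : β}
    (h₁ : WayBelow a₁ b) (h₂ : WayBelow a₂ b) : WayBelow (a₁ ⊔ a₂) b := by
  intro d hd hdir s hs hbs
  obtain ⟨z₁, hz₁, h₁'⟩ := h₁ d hd hdir s hs hbs
  obtain ⟨z₂, hz₂, h₂'⟩ := h₂ d hd hdir s hs hbs
  obtain ⟨z₃, hz₃, h₁₃, h₂₃⟩ := hdir z₁ hz₁ z₂ hz₂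
  exact ⟨z₃, hz₃, sup_le (h₁'.trans h₁₃) (h₂'.trans h₂₃)⟩

/-- Interpolation in a continuous poset. -/
lemma wayBelow_interpolate_s10 (hc : ContinuousPoset α) {w x : α} (h : WayBelow w x) :
    ∃ u, WayBelow w u ∧ WayBelow u x := by
  classical
  set D : Set α := {v | ∃ u, WayBelow v u ∧ WayBelow u x} with hD
  have hDne : D.Nonempty := by
    obtain ⟨u₀, hu₀⟩ := (hc x).1
    obtain ⟨v₀, hv₀⟩ := (hc u₀).1
    exact ⟨v₀, u₀, hv₀, hu₀⟩
  have hDdir : DirectedOn (· ≤ ·) D := by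
    rintro v₁ ⟨u₁, hv₁, hu₁⟩ v₂ ⟨u₂, hv₂, hu₂⟩
    obtain ⟨u₃, hu₃, h₁₃, h₂₃⟩ := (hc x).2.1 u₁ hu₁ u₂ hu₂
    have hv₁' : WayBelow v₁ u₃ := wayBelow_mono le_rfl hv₁ h₁₃
    have hv₂' : WayBelow v₂ u₃ := wayBelow_mono le_rfl hv₂ h₂₃
    obtain ⟨v₃, hv₃, hv₁₃, hv₂₃⟩ := (hc u₃).2.1 v₁ hv₁' v₂ hv₂'
    exact ⟨v₃, ⟨u₃, hv₃, hu₃⟩, hv₁₃, hv₂₃⟩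
  have hDlub : IsLUB D x := by
    constructor
    · rintro v ⟨u, hv, hu⟩
      exact (wayBelow_le_s10 hv).trans (wayBelow_le_s10 hu)
    · intro b hb
      refine (hc x).2.2.2 ?_
      intro u hu
      refine ((hc u).2.2).2 ?_
      intro v hv
      exact hb ⟨u, hv, hu⟩
  obtain ⟨v, hvD, hwv⟩ := h D hDne hDdir x hDlub le_rfl
  obtain ⟨u, hvu, hux⟩ := hvD
  exact ⟨u, wayBelow_mono hwv hvu le_rfl, hux⟩

end Generic

section ScottSide

variable {P : Type*} [PartialOrder P] [TopologicalSpace P] [Topology.IsScott P Set.univ]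

/-- The principal ideal `↓x` as a Scott-closed set. -/
noncomputable def ptCl (x : P) : Closeds P := ⟨Set.Iic x, isClosed_Iic⟩

lemma mem_ptCl {x y : P} : y ∈ ptCl x ↔ y ≤ x := Iff.rfl

lemma closeds_lower (A : Closeds P) : IsLowerSet (A : Set P) :=
  Topology.IsScott.isLowerSet_of_isClosed A.isClosed

lemma closeds_dirSupClosed (A : Closeds P) : DirSupClosed (A : Set P) :=
  Topology.IsScott.dirSupClosed_of_isClosed A.isClosed

lemma ptCl_le_iff {x : P} {A : Closeds P} : ptCl x ≤ A ↔ x ∈ A := by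
  constructor
  · intro h; exact h (le_refl x)
  · intro h y hy; exact closeds_lower A hy h

lemma ptCl_le_ptCl {x y : P} : ptCl x ≤ ptCl y ↔ x ≤ y := by
  rw [ptCl_le_iff]; rfl

/-- Any `WayBelow` pair in `Closeds P` is dominated by a finitely generated lower set. -/
lemma wayBelow_finite_dominated {A B : Closeds P} (h : WayBelow A B) :
    ∃ T : Finset P, (↑T : Set P) ⊆ (B : Set P) ∧ A ≤ T.sup ptCl := by
  classical
  set D : Set (Closeds P) := {C | ∃ T : Finset P, (↑T : Set P) ⊆ (B : Set P) ∧ C = T.sup ptCl}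
    with hD
  have hDne : D.Nonempty := ⟨⊥, ∅, by simp, by simp⟩
  have hDdir : DirectedOn (· ≤ ·) D := by
    rintro C₁ ⟨T₁, hT₁, rfl⟩ C₂ ⟨T₂, hT₂, rfl⟩
    refine ⟨(T₁ ∪ T₂).sup ptCl, ⟨T₁ ∪ T₂, ?_, rfl⟩, ?_, ?_⟩
    · intro t ht
      rcases Finset.mem_union.1 (by exact_mod_cast ht) with h' | h'
      · exact hT₁ (by exact_mod_cast h')
      · exact hT₂ (by exact_mod_cast h')
    · exact Finset.sup_mono Finset.subset_union_left
    · exact Finset.sup_mono Finset.subset_union_right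
  have hDlub : IsLUB D B := by
    constructor
    · rintro C ⟨T, hT, rfl⟩
      refine Finset.sup_le ?_
      intro b hb
      exact ptCl_le_iff.2 (hT hb)
    · intro u hu
      intro b hb
      have : ptCl b ≤ u := by
        have : ({b} : Finset P).sup ptCl ≤ u := hu ⟨{b}, by simpa using hb, rfl⟩
        simpa using this
      exact ptCl_le_iff.1 this
  obtain ⟨C, ⟨T, hT, rfl⟩, hAC⟩ := h D hDne hDdir B hDlub le_rfl
  exact ⟨T, hT, hAC⟩

lemma mem_finset_sup_ptCl {T : Finset P} {a : P} (h : a ∈ (T.sup ptCl : Closeds P)) :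
    ∃ b ∈ T, a ≤ b := by
  classical
  induction T using Finset.induction_on with
  | empty =>
    rw [Finset.sup_empty] at h
    have h' : a ∈ ((⊥ : Closeds P) : Set P) := h
    rw [Closeds.coe_bot] at h'
    exact (Set.notMem_empty a h').elim
  | @insert b T hb ih =>
    rw [Finset.sup_insert] at h
    have h' : a ∈ ((ptCl b : Closeds P) : Set P) ∪ ((T.sup ptCl : Closeds P) : Set P) := by
      rw [← Closeds.coe_sup]
      exact h
    rcases h' with h' | h'
    · exact ⟨b, Finset.mem_insert_self _ _, h'⟩
    · obtain ⟨c, hc, hac⟩ := ih h'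
      exact ⟨c, Finset.mem_insert_of_mem hc, hac⟩

lemma mem_finset_sup_closeds {T : Finset (Closeds P)} {a : P}
    (h : a ∈ (T.sup id : Closeds P)) : ∃ S ∈ T, a ∈ S := by
  classical
  induction T using Finset.induction_on with
  | empty =>
    rw [Finset.sup_empty] at h
    have h' : a ∈ ((⊥ : Closeds P) : Set P) := h
    rw [Closeds.coe_bot] at h'
    exact (Set.notMem_empty a h').elim
  | @insert B T hb ih =>
    rw [Finset.sup_insert] at h
    have h' : a ∈ ((id B : Closeds P) : Set P) ∪ ((T.sup id : Closeds P) : Set P) := by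
      rw [← Closeds.coe_sup]
      exact h
    rcases h' with h' | h'
    · exact ⟨B, Finset.mem_insert_self _ _, h'⟩
    · obtain ⟨C, hC, haC⟩ := ih h'
      exact ⟨C, Finset.mem_insert_of_mem hC, haC⟩

/-- A point-closure way below `↓x` is "completely" below `↓x`: any family of closed sets whose
supremum dominates `↓x` has a single member containing `g`. -/
lemma ptCl_completely_below {g x : P} (h : WayBelow (ptCl g) (ptCl x))
    {𝒯 : Set (Closeds P)} (hx : ptCl x ≤ sSup 𝒯) : ∃ T ∈ 𝒯, g ∈ T := by
  classical
  set D : Set (Closeds P) := {C | ∃ T : Finset (Closeds P), (↑T : Set (Closeds P)) ⊆ 𝒯 ∧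
    C = T.sup id} with hD
  have hDne : D.Nonempty := ⟨⊥, ∅, by simp, by simp⟩
  have hDdir : DirectedOn (· ≤ ·) D := by
    rintro C₁ ⟨T₁, hT₁, rfl⟩ C₂ ⟨T₂, hT₂, rfl⟩
    refine ⟨(T₁ ∪ T₂).sup id, ⟨T₁ ∪ T₂, ?_, rfl⟩, Finset.sup_mono Finset.subset_union_left,
      Finset.sup_mono Finset.subset_union_right⟩
    intro t ht
    rcases Finset.mem_union.1 (by exact_mod_cast ht) with h' | h'
    · exact hT₁ (by exact_mod_cast h')
    · exact hT₂ (by exact_mod_cast h')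
  have hDlub : IsLUB D (sSup 𝒯) := by
    constructor
    · rintro C ⟨T, hT, rfl⟩
      exact Finset.sup_le fun S hS => le_sSup (hT hS)
    · intro u hu
      refine sSup_le fun S hS => ?_
      have : ({S} : Finset (Closeds P)).sup id ≤ u := hu ⟨{S}, by simpa using hS, rfl⟩
      simpa using this
  obtain ⟨C, ⟨T, hT, rfl⟩, hgC⟩ := h D hDne hDdir (sSup 𝒯) hDlub hx
  obtain ⟨S, hS, hgS⟩ := mem_finset_sup_closeds (hgC (le_refl g))
  exact ⟨S, hT hS, hgS⟩

end ScottSide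

/-- A poset `P` is continuous iff the complete lattice `Γ(P)` of Scott closed subsets of `P`
is a continuous lattice. -/
theorem continuousPoset_iff_continuous_closeds
    {P : Type*} [PartialOrder P] [TopologicalSpace P] [Topology.IsScott P Set.univ] :
    ContinuousPoset P ↔ ContinuousPoset (TopologicalSpace.Closeds P) := by
  constructor
  · -- Forward direction
    intro hP C
    -- key lemma : points of C yield way-below point closures
    have key : ∀ x ∈ C, ∀ w : P, WayBelow w x → WayBelow (ptCl w) C := by
      intro x hx w hw
      obtain ⟨v, hwv, hvx⟩ := wayBelow_interpolate_s10 hP hw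
      -- O := {y | v ≪ y} is Scott open
      set O : Set P := {y | WayBelow v y} with hO
      have hOopen : IsOpen O := by
        rw [Topology.IsScott.isOpen_iff_isUpperSet_and_dirSupInaccOn (D := Set.univ)]
        constructor
        · intro y y' hyy' hy
          exact wayBelow_mono le_rfl hy hyy'
        · intro d _ hdne hdir a hlub ha
          obtain ⟨v', hvv', hv'a⟩ := wayBelow_interpolate_s10 hP ha
          obtain ⟨z, hz, hv'z⟩ := hv'a d hdne hdir a hlub le_rfl
          exact ⟨z, hz, wayBelow_mono le_rfl hvv' hv'z⟩
      intro 𝒞 h𝒞ne h𝒞dir S hSlub hCS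
      have hSsup : sSup 𝒞 = S := hSlub.sSup_eq
      have hxS : x ∈ (S : Set P) := hCS hx
      have hxcl : x ∈ closure (⋃₀ ((↑) '' 𝒞) : Set P) := by
        rw [← hSsup] at hxS
        simpa [Closeds.coe_sSup] using hxS
      have hxO : x ∈ O := hvx
      obtain ⟨y, hyO, hyU⟩ := (mem_closure_iff.1 hxcl) O hOopen hxO
      obtain ⟨U, ⟨C', hC', rfl⟩, hyC'⟩ := hyU
      refine ⟨C', hC', ?_⟩
      have hvy : v ≤ y := wayBelow_le_s10 hyO
      have hwy : w ≤ y := (wayBelow_le_s10 hwv).trans hvy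
      exact ptCl_le_iff.2 (closeds_lower C' hwy hyC')
    refine ⟨⟨⊥, wayBelow_bot⟩, ?_, ?_⟩
    · rintro D₁ h₁ D₂ h₂
      exact ⟨D₁ ⊔ D₂, wayBelow_sup h₁ h₂, le_sup_left, le_sup_right⟩
    · constructor
      · intro D hD
        exact wayBelow_le_s10 hD
      · intro u hu
        intro x hx
        have hsub : {w : P | WayBelow w x} ⊆ (u : Set P) := by
          intro w hw
          have : ptCl w ≤ u := hu (key x hx w hw)
          exact ptCl_le_iff.1 this
        obtain ⟨hne, hdir, hlub⟩ := hP x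
        exact closeds_dirSupClosed u hsub hne hdir hlub
  · -- Backward direction
    intro hΓ
    -- Interpolation in Γ
    have interp : ∀ {A C : Closeds P}, WayBelow A C →
        ∃ B, WayBelow A B ∧ WayBelow B C := fun {A C} h =>
      wayBelow_interpolate_s10 hΓ h
    intro x
    set G : Set P := {g | WayBelow (ptCl g) (ptCl x)} with hG
    obtain ⟨h𝒜ne, h𝒜dir, h𝒜lub⟩ := hΓ (ptCl x)
    -- every way-below closed set is pointwise dominated by G
    have domG : ∀ A : Closeds P, WayBelow A (ptCl x) → ∀ a ∈ A, ∃ g ∈ G, a ≤ g := by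
      intro A hA a ha
      obtain ⟨B, hAB, hBx⟩ := interp hA
      obtain ⟨T, hTB, hAT⟩ := wayBelow_finite_dominated hAB
      obtain ⟨b, hbT, hab⟩ := mem_finset_sup_ptCl (hAT ha)
      refine ⟨b, ?_, hab⟩
      have hbB : ptCl b ≤ B := ptCl_le_iff.2 (hTB hbT)
      exact wayBelow_mono hbB hBx le_rfl
    -- G is way below x pointwise
    have hGwb : ∀ g ∈ G, WayBelow g x := by
      intro g hg d hdne hdir s hlub hxs
      set 𝒞 : Set (Closeds P) := (fun z => ptCl z) '' d with h𝒞
      have h𝒞ne : 𝒞.Nonempty := hdne.image _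
      have h𝒞dir : DirectedOn (· ≤ ·) 𝒞 := by
        rintro _ ⟨z₁, hz₁, rfl⟩ _ ⟨z₂, hz₂, rfl⟩
        obtain ⟨z₃, hz₃, h₁₃, h₂₃⟩ := hdir z₁ hz₁ z₂ hz₂
        exact ⟨ptCl z₃, ⟨z₃, hz₃, rfl⟩, ptCl_le_ptCl.2 h₁₃, ptCl_le_ptCl.2 h₂₃⟩
      have hd𝒞 : ∀ z ∈ d, z ∈ (sSup 𝒞 : Closeds P) := by
        intro z hz
        have : ptCl z ≤ sSup 𝒞 := le_sSup ⟨z, hz, rfl⟩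
        exact this (le_refl z)
      have hs𝒞 : s ∈ (sSup 𝒞 : Closeds P) :=
        closeds_dirSupClosed (sSup 𝒞) hd𝒞 hdne hdir hlub
      have hx𝒞 : ptCl x ≤ sSup 𝒞 :=
        ptCl_le_iff.2 (closeds_lower (sSup 𝒞) hxs hs𝒞)
      obtain ⟨_, ⟨z, hz, rfl⟩, hgz⟩ :=
        hg 𝒞 h𝒞ne h𝒞dir (sSup 𝒞) (isLUB_sSup 𝒞) hx𝒞
      exact ⟨z, hz, ptCl_le_ptCl.1 hgz⟩
    -- G is nonempty
    have hGne : G.Nonempty := by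
      have hA : ∃ A ∈ {d : Closeds P | WayBelow d (ptCl x)}, (A : Set P).Nonempty := by
        by_contra hcon
        push_neg at hcon
        have hbot : (⊥ : Closeds P) ∈ upperBounds {d : Closeds P | WayBelow d (ptCl x)} := by
          intro A hA
          have hAemp : (A : Set P) = ∅ := hcon A hA
          intro a ha
          exact (Set.eq_empty_iff_forall_notMem.1 hAemp a ha).elim
        have hle : ptCl x ≤ ⊥ := h𝒜lub.2 hbot
        have hxbot : x ∈ ((⊥ : Closeds P) : Set P) := hle (le_refl x)
        simpa using hxbot
      obtain ⟨A₀, hA₀, a₀, ha₀⟩ := hA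
      obtain ⟨g, hg, _⟩ := domG A₀ hA₀ a₀ ha₀
      exact ⟨g, hg⟩
    -- x is the least upper bound of G
    have hGub : x ∈ upperBounds G := by
      intro g hg
      exact ptCl_le_ptCl.1 (wayBelow_le_s10 hg)
    have hGlub : IsLUB G x := by
      refine ⟨hGub, ?_⟩
      intro u hu
      have : ptCl x ≤ ptCl u := by
        refine h𝒜lub.2 ?_
        intro A hA
        intro a ha
        obtain ⟨g, hg, hag⟩ := domG A hA a ha
        exact mem_ptCl.2 (hag.trans (hu hg))
      exact ptCl_le_ptCl.1 this
    -- the family of point closures of G dominates ↓x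
    have hGsup : ptCl x ≤ sSup ((fun g => ptCl g) '' G) := by
      refine h𝒜lub.2 ?_
      intro A hA a ha
      obtain ⟨g, hg, hag⟩ := domG A hA a ha
      have : ptCl g ≤ sSup ((fun g => ptCl g) '' G) := le_sSup ⟨g, hg, rfl⟩
      exact this (mem_ptCl.2 hag)
    -- G is directed
    have hGdir : DirectedOn (· ≤ ·) G := by
      intro g₁ hg₁ g₂ hg₂
      by_contra hcon
      push_neg at hcon
      set 𝒮₁ : Set (Closeds P) := {C | ∃ g ∈ G, ¬ g₁ ≤ g ∧ C = ptCl g} with h𝒮₁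
      set 𝒮₂ : Set (Closeds P) := {C | ∃ g ∈ G, ¬ g₂ ≤ g ∧ C = ptCl g} with h𝒮₂
      have hsplit : sSup ((fun g => ptCl g) '' G) ≤ sSup 𝒮₁ ⊔ sSup 𝒮₂ := by
        refine sSup_le ?_
        rintro _ ⟨g, hg, rfl⟩
        by_cases h1 : g₁ ≤ g
        · have h2 : ¬ g₂ ≤ g := fun h2 => hcon g hg h1 h2
          exact le_trans (le_sSup (show ptCl g ∈ 𝒮₂ from ⟨g, hg, h2, rfl⟩)) le_sup_right
        · exact le_trans (le_sSup (show ptCl g ∈ 𝒮₁ from ⟨g, hg, h1, rfl⟩)) le_sup_left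
      have hx12 : x ∈ ((sSup 𝒮₁ ⊔ sSup 𝒮₂ : Closeds P) : Set P) :=
        (hGsup.trans hsplit) (le_refl x)
      rcases (by exact_mod_cast hx12 :
          x ∈ ((sSup 𝒮₁ : Closeds P) : Set P) ∪ ((sSup 𝒮₂ : Closeds P) : Set P)) with hx1 | hx2
      · have : ptCl x ≤ sSup 𝒮₁ := ptCl_le_iff.2 hx1
        obtain ⟨T, hT, hgT⟩ := ptCl_completely_below hg₁ this
        obtain ⟨g, _, hng, rfl⟩ := hT
        exact hng hgT
      · have : ptCl x ≤ sSup 𝒮₂ := ptCl_le_iff.2 hx2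
        obtain ⟨T, hT, hgT⟩ := ptCl_completely_below hg₂ this
        obtain ⟨g, _, hng, rfl⟩ := hT
        exact hng hgT
    -- Conclusion
    have hGsubw : G ⊆ {d : P | WayBelow d x} := fun g hg => hGwb g hg
    obtain ⟨g₀, hg₀⟩ := id hGne
    refine ⟨⟨g₀, hGwb g₀ hg₀⟩, ?_, ?_⟩
    · intro w₁ hw₁ w₂ hw₂
      obtain ⟨g₁, hg₁G, hw₁g₁⟩ := hw₁ G hGne hGdir x hGlub le_rfl
      obtain ⟨g₂, hg₂G, hw₂g₂⟩ := hw₂ G hGne hGdir x hGlub le_rfl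
      obtain ⟨g₃, hg₃G, h₁₃, h₂₃⟩ := hGdir g₁ hg₁G g₂ hg₂G
      exact ⟨g₃, hGwb g₃ hg₃G, hw₁g₁.trans h₁₃, hw₂g₂.trans h₂₃⟩
    · constructor
      · intro w hw
        exact wayBelow_le_s10 hw
      · intro u hu
        exact hGlub.2 fun g hg => hu (hGwb g hg)
end
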